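/- arXiv:2503.03577 — 2 statements merged into one kernel-verified Lean document; each statement's English description precedes it below -/
import Mathlib

section
/- Every saturated precolored convex Θ^3-drawing of a graph G on n ≥ 3 vertices has at least 5n/2 − 6 edges, i.e., 2·|E(G)| ≥ 5n − 12. -/
/-- Points of the plane. -/
abbrev Pt : Type := ℝ × ℝ

/-- Two straight-line segments cross if some point lies in the interior
(open segment) of both. -/
def SegCross (a b c d : Pt) : Prop :=
  ∃ x : Pt, x ∈ openSegment ℝ a b ∧ x ∈ openSegment ℝ c d

/-- Two edges (unordered pairs of vertices) cross in the drawing `p`. -/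
def EdgeCross {V : Type} (p : V → Pt) (e f : Sym2 V) : Prop :=
  ∃ u v x y : V, e = s(u, v) ∧ f = s(x, y) ∧ SegCross (p u) (p v) (p x) (p y)

/-- The drawing `p` is injective and no three vertex points are collinear. -/
def GenPos {V : Type} (p : V → Pt) : Prop :=
  Function.Injective p ∧
    ∀ u v w : V, u ≠ v → u ≠ w → v ≠ w → ¬ Collinear ℝ ({p u, p v, p w} : Set Pt)

/-- The vertex points are in convex position: every vertex point is an extreme
point of the convex hull of all vertex points. -/
def ConvexPos {V : Type} (p : V → Pt) : Prop :=
  ∀ v : V, p v ∈ Set.extremePoints ℝ (convexHull ℝ (Set.range p))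

/-- A `k`-coloring of the edges of `G` is crossing-free if no two distinct
edges of the same color cross. -/
def CrossingFree {V : Type} {k : ℕ} (G : SimpleGraph V) (p : V → Pt)
    (φ : Sym2 V → Fin k) : Prop :=
  ∀ e ∈ G.edgeSet, ∀ f ∈ G.edgeSet, e ≠ f → φ e = φ f → ¬ EdgeCross p e f

open scoped Classical

/-- A precolored drawing `(G, p, φ)` is saturated: for every pair of distinct
non-adjacent vertices and every color `c`, assigning color `c` to the new edge
`uv` yields a coloring that is not crossing-free. -/
def PrecoloredSaturated {V : Type} {k : ℕ} (G : SimpleGraph V) (p : V → Pt)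
    (φ : Sym2 V → Fin k) : Prop :=
  ∀ u v : V, u ≠ v → ¬ G.Adj u v → ∀ c : Fin k,
    ¬ CrossingFree (G ⊔ SimpleGraph.fromEdgeSet {s(u, v)}) p
      (fun e => if e = s(u, v) then c else φ e)

/-- A (non-precolored) drawing of `G` is saturated for thickness `k`: for every
pair of distinct non-adjacent vertices `u, v`, the drawing of `G + uv` admits
no crossing-free `k`-coloring. -/
def Saturated {V : Type} (k : ℕ) (G : SimpleGraph V) (p : V → Pt) : Prop :=
  ∀ u v : V, u ≠ v → ¬ G.Adj u v →
    ∀ φ : Sym2 V → Fin k,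
      ¬ CrossingFree (G ⊔ SimpleGraph.fromEdgeSet {s(u, v)}) p φ

/-- Twice the signed area of the triangle `a b c`. -/
def det2 (a b c : Pt) : ℝ :=
  (b.1 - a.1) * (c.2 - a.2) - (b.2 - a.2) * (c.1 - a.1)

namespace ThmAux


lemma det2_rot (a b c : Pt) : det2 a b c = det2 b c a := by
  simp only [det2]; ring

lemma det2_swap23 (a b c : Pt) : det2 a b c = - det2 a c b := by
  simp only [det2]; ring

lemma det2_swap12 (a b c : Pt) : det2 a b c = - det2 b a c := by
  simp only [det2]; ring

lemma mem_openSegment_iff {a b x : Pt} :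
    x ∈ openSegment ℝ a b ↔ ∃ t : ℝ, 0 < t ∧ t < 1 ∧ (1 - t) • a + t • b = x := by
  rw [openSegment_eq_image]
  constructor
  · rintro ⟨t, ht, rfl⟩; exact ⟨t, ht.1, ht.2, rfl⟩
  · rintro ⟨t, h1, h2, rfl⟩; exact ⟨t, ⟨h1, h2⟩, rfl⟩

lemma comb_fst (t : ℝ) (a b : Pt) : ((1 - t) • a + t • b).1 = (1 - t) * a.1 + t * b.1 := rfl
lemma comb_snd (t : ℝ) (a b : Pt) : ((1 - t) • a + t • b).2 = (1 - t) * a.2 + t * b.2 := rfl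

lemma det2_comb (a b c d : Pt) (t : ℝ) :
    det2 a b ((1 - t) • c + t • d) = (1 - t) * det2 a b c + t * det2 a b d := by
  simp only [det2, comb_fst, comb_snd]; ring

lemma det2_self_right (a b : Pt) : det2 a b b = 0 := by simp only [det2]; ring
lemma det2_self_mid (a b : Pt) : det2 a b a = 0 := by simp only [det2]; ring
lemma det2_self_left (a b : Pt) : det2 a a b = 0 := by simp only [det2]; ring

lemma det2_zero_on_seg {c d x : Pt} (hx : x ∈ openSegment ℝ c d) : det2 c d x = 0 := by
  rcases mem_openSegment_iff.1 hx with ⟨t, _, _, rfl⟩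
  rw [det2_comb, det2_self_mid, det2_self_right]; ring

/-- crossing implies mutual strict sign separation -/
lemma segCross_signs {a b c d : Pt} (h : SegCross a b c d)
    (h1 : det2 c d a ≠ 0) (h2 : det2 c d b ≠ 0)
    (h3 : det2 a b c ≠ 0) (h4 : det2 a b d ≠ 0) :
    det2 c d a * det2 c d b < 0 ∧ det2 a b c * det2 a b d < 0 := by
  obtain ⟨x, hab, hcd⟩ := h
  have e1 : det2 c d x = 0 := det2_zero_on_seg hcd
  have e2 : det2 a b x = 0 := det2_zero_on_seg hab
  rcases mem_openSegment_iff.1 hab with ⟨t, ht0, ht1, rfl⟩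
  have key : (1 - t) * det2 c d a + t * det2 c d b = 0 := by
    rw [← det2_comb]; exact e1
  constructor
  · rcases lt_or_gt_of_ne h1 with hA | hA
    · have hB : 0 < det2 c d b := by nlinarith
      nlinarith
    · have hB : det2 c d b < 0 := by nlinarith
      nlinarith
  · -- for the second segment similarly; x is also on open segment c d
    rcases mem_openSegment_iff.1 hcd with ⟨s, hs0, hs1, hx⟩
    have key2 : (1 - s) * det2 a b c + s * det2 a b d = 0 := by
      rw [← det2_comb, hx]; exact e2
    rcases lt_or_gt_of_ne h3 with hA | hA
    · have hB : 0 < det2 a b d := by nlinarith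
      nlinarith
    · have hB : det2 a b d < 0 := by nlinarith
      nlinarith

/-- mutual strict sign separation implies crossing -/
lemma signs_segCross {a b c d : Pt}
    (h1 : det2 c d a * det2 c d b < 0) (h2 : det2 a b c * det2 a b d < 0) :
    SegCross a b c d := by
  set A := det2 c d a with hA
  set B := det2 c d b with hB
  set C := det2 a b c with hC
  set D := det2 a b d with hD
  have hAB : A - B ≠ 0 := by
    intro h; rw [sub_eq_zero] at h; rw [h] at h1; nlinarith
  set t : ℝ := A / (A - B) with hT
  have ht0 : 0 < t := by
    rcases mul_neg_iff.1 h1 with ⟨hp, hq⟩ | ⟨hp, hq⟩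
    · exact div_pos hp (by linarith)
    · exact div_pos_of_neg_of_neg hp (by linarith)
  have ht1 : t < 1 := by
    rcases mul_neg_iff.1 h1 with ⟨hp, hq⟩ | ⟨hp, hq⟩
    · rw [div_lt_one (by linarith : (0:ℝ) < A - B)]; linarith
    · rw [div_lt_one_of_neg (by linarith : A - B < 0)]; linarith
  set x : Pt := (1 - t) • a + t • b with hx
  have hxab : x ∈ openSegment ℝ a b := mem_openSegment_iff.2 ⟨t, ht0, ht1, rfl⟩
  have hdcdx : det2 c d x = 0 := by
    rw [hx, det2_comb, ← hA, ← hB, hT]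
    field_simp
    ring
  -- now show x ∈ openSegment c d
  have hA0 : A ≠ 0 := by intro h; rw [h] at h1; nlinarith
  have hcd : c ≠ d := by
    intro h
    apply hA0
    rw [hA, h, det2_self_left]
  -- find s with x = (1-s) c + s d
  have hexists : ∃ s : ℝ, (1 - s) • c + s • d = x := by
    by_cases hcd1 : d.1 - c.1 ≠ 0
    · refine ⟨(x.1 - c.1) / (d.1 - c.1), ?_⟩
      have h2' : (d.1 - c.1) * (x.2 - c.2) = (d.2 - c.2) * (x.1 - c.1) := by
        have : det2 c d x = 0 := hdcdx
        simp only [det2] at this; linarith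
      apply Prod.ext
      · show (1 - (x.1 - c.1) / (d.1 - c.1)) * c.1 + (x.1 - c.1) / (d.1 - c.1) * d.1 = x.1
        field_simp; ring
      · show (1 - (x.1 - c.1) / (d.1 - c.1)) * c.2 + (x.1 - c.1) / (d.1 - c.1) * d.2 = x.2
        field_simp
        nlinarith [h2']
    · push_neg at hcd1
      have hcd2 : d.2 - c.2 ≠ 0 := by
        intro h
        apply hcd
        apply Prod.ext <;> [skip; skip] <;> linarith
      refine ⟨(x.2 - c.2) / (d.2 - c.2), ?_⟩
      have h2' : (d.1 - c.1) * (x.2 - c.2) = (d.2 - c.2) * (x.1 - c.1) := by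
        have : det2 c d x = 0 := hdcdx
        simp only [det2] at this; linarith
      apply Prod.ext
      · show (1 - (x.2 - c.2) / (d.2 - c.2)) * c.1 + (x.2 - c.2) / (d.2 - c.2) * d.1 = x.1
        field_simp
        nlinarith [h2']
      · show (1 - (x.2 - c.2) / (d.2 - c.2)) * c.2 + (x.2 - c.2) / (d.2 - c.2) * d.2 = x.2
        field_simp; ring
  obtain ⟨s, hs⟩ := hexists
  have habx : det2 a b x = 0 := by
    rw [hx, det2_comb, det2_self_mid, det2_self_right]; ring
  have keys : (1 - s) * C + s * D = 0 := by
    rw [hC, hD, ← det2_comb, hs]; exact habx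
  have hCD : C - D ≠ 0 := by
    intro h; rw [sub_eq_zero] at h; rw [h] at h2; nlinarith
  have hs_eq : s = C / (C - D) := by
    field_simp
    linarith
  have hs0 : 0 < s := by
    rw [hs_eq]
    rcases mul_neg_iff.1 h2 with ⟨hp, hq⟩ | ⟨hp, hq⟩
    · exact div_pos hp (by linarith)
    · exact div_pos_of_neg_of_neg hp (by linarith)
  have hs1 : s < 1 := by
    rw [hs_eq]
    rcases mul_neg_iff.1 h2 with ⟨hp, hq⟩ | ⟨hp, hq⟩
    · rw [div_lt_one (by linarith : (0:ℝ) < C - D)]; linarith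
    · rw [div_lt_one_of_neg (by linarith : C - D < 0)]; linarith
  exact ⟨x, hxab, mem_openSegment_iff.2 ⟨s, hs0, hs1, hs⟩⟩

/-- segments sharing the endpoint `a` do not cross when `a,b,c` not collinear -/
lemma not_segCross_shared {a b c : Pt} (h : det2 a b c ≠ 0) : ¬ SegCross a b a c := by
  rintro ⟨x, h1, h2⟩
  rcases mem_openSegment_iff.1 h1 with ⟨t, ht0, _, hxt⟩
  rcases mem_openSegment_iff.1 h2 with ⟨s, hs0, _, hxs⟩
  apply h
  have e1 : t * (b.1 - a.1) = s * (c.1 - a.1) := by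
    have := congrArg Prod.fst (hxt.trans hxs.symm)
    simp only [comb_fst] at this; linarith
  have e2 : t * (b.2 - a.2) = s * (c.2 - a.2) := by
    have := congrArg Prod.snd (hxt.trans hxs.symm)
    simp only [comb_snd] at this; linarith
  have : t * s * det2 a b c = 0 := by
    simp only [det2]
    linear_combination (s*(c.2-a.2)) * e1 - (s*(c.1-a.1)) * e2
  have hts : t * s ≠ 0 := by positivity
  exact (mul_eq_zero.1 this).resolve_left hts

lemma segCross_comm {a b c d : Pt} : SegCross a b c d ↔ SegCross c d a b := by
  unfold SegCross; tauto

lemma segCross_swap_left {a b c d : Pt} : SegCross a b c d ↔ SegCross b a c d := by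
  unfold SegCross
  simp_rw [openSegment_symm ℝ a b]

lemma segCross_swap_right {a b c d : Pt} : SegCross a b c d ↔ SegCross a b d c := by
  unfold SegCross
  simp_rw [openSegment_symm ℝ c d]

lemma collinear_of_det2_eq_zero {a b c : Pt} (h : det2 a b c = 0) :
    Collinear ℝ ({a, b, c} : Set Pt) := by
  rcases eq_or_ne a b with rfl | hab
  · have : ({a, a, c} : Set Pt) = {a, c} := by simp
    rw [this]; exact collinear_pair ℝ a c
  rw [collinear_iff_of_mem (Set.mem_insert a {b, c})]
  refine ⟨b - a, ?_⟩
  intro x hx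
  simp only [Set.mem_insert_iff, Set.mem_singleton_iff] at hx
  have key : ∀ t : ℝ, x.1 = t * (b.1 - a.1) + a.1 → x.2 = t * (b.2 - a.2) + a.2 →
      x = t • (b - a) +ᵥ a := by
    intro t h1 h2
    have : t • (b - a) +ᵥ a = (t * (b.1 - a.1) + a.1, t * (b.2 - a.2) + a.2) := by
      apply Prod.ext
      · simp [Prod.smul_fst, smul_eq_mul]
      · simp [Prod.smul_snd, smul_eq_mul]
    rw [this]
    apply Prod.ext
    · simpa using h1
    · simpa using h2
  rcases hx with h'|h'|h'
  · subst h'; exact ⟨0, key 0 (by ring) (by ring)⟩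
  · subst h'; exact ⟨1, key 1 (by ring) (by ring)⟩
  · subst h'
    simp only [det2] at h
    by_cases h1 : b.1 - a.1 ≠ 0
    · refine ⟨(x.1 - a.1) / (b.1 - a.1), key _ ?_ ?_⟩
      · field_simp; ring
      · rw [div_mul_eq_mul_div, ← sub_eq_iff_eq_add, eq_div_iff h1]
        nlinarith [h]
    · push_neg at h1
      have h2 : b.2 - a.2 ≠ 0 := by
        intro h2; apply hab; apply Prod.ext <;> linarith
      refine ⟨(x.2 - a.2) / (b.2 - a.2), key _ ?_ ?_⟩
      · have hx1 : (b.2 - a.2) * (x.1 - a.1) = 0 := by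
          rw [h1] at h; linarith [h]
        have hx1' := (mul_eq_zero.1 hx1).resolve_left h2
        rw [h1, mul_zero, zero_add]
        linarith
      · field_simp; ring

section OrderSec
variable {n : ℕ} {p : Fin n → Pt}

lemma det2_ne (hgen : GenPos p) {u v w : Fin n} (h1 : u ≠ v) (h2 : u ≠ w) (h3 : v ≠ w) :
    det2 (p u) (p v) (p w) ≠ 0 :=
  fun h => hgen.2 u v w h1 h2 h3 (collinear_of_det2_eq_zero h)

lemma not_in_triangle (hgen : GenPos p) (hconv : ConvexPos p) {w u v t : Fin n} (hwu : w ≠ u)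
    (h1 : 0 < det2 (p u) (p v) (p w)) (h2 : 0 < det2 (p v) (p t) (p w))
    (h3 : 0 < det2 (p t) (p u) (p w)) : False := by
  set A := p u with hA
  set B := p v with hB
  set C := p t with hC
  set W := p w with hW
  have hsum : det2 A B C = det2 B C W + det2 C A W + det2 A B W := by
    simp only [det2]; ring
  have hD : 0 < det2 A B C := by rw [hsum]; linarith
  have hs : 0 < det2 C A W + det2 A B W := by linarith
  have hW1 : det2 A B C * W.1 = det2 B C W * A.1 + det2 C A W * B.1 + det2 A B W * C.1 := by
    simp only [det2]; ring
  have hW2 : det2 A B C * W.2 = det2 B C W * A.2 + det2 C A W * B.2 + det2 A B W * C.2 := by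
    simp only [det2]; ring
  set s := det2 C A W + det2 A B W with hs_def
  set m : Pt := (det2 C A W / s) • B + (det2 A B W / s) • C with hm_def
  have hmm : m ∈ convexHull ℝ (Set.range p) := by
    have memB : B ∈ convexHull ℝ (Set.range p) := subset_convexHull ℝ _ ⟨v, rfl⟩
    have memC : C ∈ convexHull ℝ (Set.range p) := subset_convexHull ℝ _ ⟨t, rfl⟩
    exact (convex_convexHull ℝ _) memB memC
      (le_of_lt (div_pos h3 hs)) (le_of_lt (div_pos h1 hs))
      (by field_simp; exact hs_def.symm)
  set τ : ℝ := s / det2 A B C with hτ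
  have ht0 : 0 < τ := div_pos hs hD
  have ht1 : τ < 1 := by
    rw [hτ, div_lt_one hD]; linarith
  have hcomb : (1 - τ) • A + τ • m = W := by
    have hsne : s ≠ 0 := ne_of_gt hs
    have hDne : det2 A B C ≠ 0 := ne_of_gt hD
    have eβ : τ * (det2 C A W / s) = det2 C A W / det2 A B C := by
      rw [hτ]; field_simp
    have eγ : τ * (det2 A B W / s) = det2 A B W / det2 A B C := by
      rw [hτ]; field_simp
    have eα : 1 - τ = det2 B C W / det2 A B C := by
      rw [hτ, eq_div_iff hDne, sub_mul, one_mul, div_mul_cancel₀ _ hDne]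
      linarith [hsum]
    apply Prod.ext
    · show (1 - τ) * A.1 + τ * ((det2 C A W / s) * B.1 + (det2 A B W / s) * C.1) = W.1
      rw [mul_add, ← mul_assoc, ← mul_assoc, eβ, eγ, eα,
        div_mul_eq_mul_div, div_mul_eq_mul_div, div_mul_eq_mul_div,
        ← add_div, ← add_div, eq_comm, eq_div_iff hDne]
      linear_combination hW1
    · show (1 - τ) * A.2 + τ * ((det2 C A W / s) * B.2 + (det2 A B W / s) * C.2) = W.2
      rw [mul_add, ← mul_assoc, ← mul_assoc, eβ, eγ, eα,
        div_mul_eq_mul_div, div_mul_eq_mul_div, div_mul_eq_mul_div,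
        ← add_div, ← add_div, eq_comm, eq_div_iff hDne]
      linear_combination hW2
  have hWm : W ∈ openSegment ℝ A m := mem_openSegment_iff.2 ⟨τ, ht0, ht1, hcomb⟩
  have hAmem : A ∈ convexHull ℝ (Set.range p) := subset_convexHull ℝ _ ⟨u, rfl⟩
  have hext := hconv w
  have hAW : A = W := (hext.2 hAmem hmm hWm)
  exact hwu (hgen.1 hAW.symm)

lemma det_trans (hgen : GenPos p) (hconv : ConvexPos p) {z u v w : Fin n}
    (h1 : 0 < det2 (p z) (p u) (p v)) (h2 : 0 < det2 (p z) (p v) (p w))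
    (huw : u ≠ w) : 0 < det2 (p z) (p u) (p w) := by
  have hzu : z ≠ u := by
    rintro rfl; rw [det2_self_left] at h1; linarith
  have hzw : z ≠ w := by
    rintro rfl
    rw [det2_rot, det2_self_right] at h2; linarith
  have hne := det2_ne hgen hzu hzw huw
  rcases lt_or_gt_of_ne hne with hneg | hpos
  · exfalso
    apply not_in_triangle hgen hconv (w := z) (u := u) (v := v) (t := w) hzu
    · rw [show det2 (p u) (p v) (p z) = det2 (p z) (p u) (p v) from by rw [det2_rot, det2_rot]]
      exact h1
    · rw [show det2 (p v) (p w) (p z) = det2 (p z) (p v) (p w) from by rw [det2_rot, det2_rot]]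
      exact h2
    · rw [show det2 (p w) (p u) (p z) = - det2 (p z) (p u) (p w) from by
        rw [det2_rot, det2_rot, det2_swap23 (p z)]]
      linarith
  · exact hpos

lemma exists_order (hn : 0 < n) (hgen : GenPos p) (hconv : ConvexPos p) :
    ∃ σ : Fin n → Fin n, Function.Bijective σ ∧
      ∀ i j k : Fin n, i < j → j < k → 0 < det2 (p (σ i)) (p (σ j)) (p (σ k)) := by
  classical
  set b₀ : Fin n := ⟨0, hn⟩ with hb₀def
  set r' : Fin n → Fin n → Prop := fun i j =>
    i = j ∨ (i = b₀ ∧ j ≠ b₀) ∨ (i ≠ b₀ ∧ j ≠ b₀ ∧ 0 < det2 (p b₀) (p i) (p j)) with hr'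
  letI : DecidableRel r' := Classical.decRel _
  haveI htrans : IsTrans (Fin n) r' := by
    constructor
    intro a b c hab hbc
    rcases hab with rfl | ⟨rfl, hb⟩ | ⟨ha, hb, hd1⟩
    · exact hbc
    · rcases hbc with rfl | ⟨h1, h2⟩ | ⟨h1, h2, hd2⟩
      · exact Or.inr (Or.inl ⟨rfl, hb⟩)
      · exact absurd h1 hb
      · exact Or.inr (Or.inl ⟨rfl, h2⟩)
    · rcases hbc with rfl | ⟨h1, h2⟩ | ⟨h1, h2, hd2⟩
      · exact Or.inr (Or.inr ⟨ha, hb, hd1⟩)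
      · exact absurd h1 hb
      · rcases eq_or_ne a c with rfl | hac
        · exact Or.inl rfl
        · exact Or.inr (Or.inr ⟨ha, h2, det_trans hgen hconv hd1 hd2 hac⟩)
  haveI hantisymm : IsAntisymm (Fin n) r' := by
    constructor
    intro a b hab hba
    rcases hab with rfl | ⟨rfl, hb⟩ | ⟨ha, hb, hd1⟩
    · rfl
    · rcases hba with rfl | ⟨h1, h2⟩ | ⟨h1, h2, hd2⟩
      · rfl
      · exact absurd h1 hb
      · exact absurd rfl h2
    · rcases hba with rfl | ⟨h1, h2⟩ | ⟨h1, h2, hd2⟩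
      · rfl
      · exact absurd h1 hb
      · exfalso
        rw [det2_swap23] at hd2
        linarith
  haveI htotal : IsTotal (Fin n) r' := by
    constructor
    intro a b
    rcases eq_or_ne a b with rfl | hab
    · exact Or.inl (Or.inl rfl)
    rcases eq_or_ne a b₀ with rfl | ha
    · exact Or.inl (Or.inr (Or.inl ⟨rfl, Ne.symm hab⟩))
    rcases eq_or_ne b b₀ with rfl | hb
    · exact Or.inr (Or.inr (Or.inl ⟨rfl, hab⟩))
    have hne := det2_ne hgen (Ne.symm ha) (Ne.symm hb) hab
    rcases lt_or_gt_of_ne hne with hneg | hpos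
    · refine Or.inr (Or.inr (Or.inr ⟨hb, ha, ?_⟩))
      rw [det2_swap23]; linarith
    · exact Or.inl (Or.inr (Or.inr ⟨ha, hb, hpos⟩))
  set l := Finset.sort Finset.univ r' with hl
  have hlen : l.length = n := by
    rw [hl, Finset.length_sort, Finset.card_univ, Fintype.card_fin]
  set σ : Fin n → Fin n := fun i => l.get (Fin.cast hlen.symm i) with hσ
  have hnodup : l.Nodup := Finset.sort_nodup Finset.univ r'
  have hinj : Function.Injective σ := by
    intro i j h
    have h2 := List.nodup_iff_injective_get.1 hnodup h
    have h3 : i.val = j.val := by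
      simpa [Fin.coe_cast] using congrArg Fin.val h2
    exact Fin.ext h3
  have hbij : Function.Bijective σ := (Finite.injective_iff_bijective).1 hinj
  have hsorted := Finset.pairwise_sort Finset.univ r'
  have hpair := List.pairwise_iff_get.1 hsorted
  have hRlt : ∀ i j : Fin n, i < j → r' (σ i) (σ j) := by
    intro i j hij
    exact hpair _ _ (by simp only [Fin.lt_def, Fin.coe_cast]; exact hij)
  refine ⟨σ, hbij, ?_⟩
  intro i j k hij hjk
  have hik : i < k := lt_trans hij hjk
  have hneij : σ i ≠ σ j := fun h => (ne_of_lt hij) (hinj h)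
  have hnejk : σ j ≠ σ k := fun h => (ne_of_lt hjk) (hinj h)
  have hneik : σ i ≠ σ k := fun h => (ne_of_lt hik) (hinj h)
  have r1 := hRlt i j hij
  have r2 := hRlt j k hjk
  have r3 := hRlt i k hik
  rcases r1 with h | ⟨hib, hjb⟩ | ⟨hib, hjb, d1⟩
  · exact absurd h hneij
  · -- σ i = b₀
    rcases r2 with h | ⟨h1, h2⟩ | ⟨h1, h2, d2⟩
    · exact absurd h hnejk
    · exact absurd h1 hjb
    · rw [hib]; exact d2
  · rcases r2 with h | ⟨h1, h2⟩ | ⟨h1, h2, d2⟩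
    · exact absurd h hnejk
    · exact absurd h1 hjb
    · rcases r3 with h | ⟨h1', h2'⟩ | ⟨h1', h2', d3⟩
      · exact absurd h hneik
      · exact absurd h1' hib
      · -- all three dets from b₀ positive
        have hnetri := det2_ne hgen hneij hneik hnejk
        rcases lt_or_gt_of_ne hnetri with hneg | hpos
        · exfalso
          apply not_in_triangle hgen hconv (w := σ j) (u := b₀) (v := σ i) (t := σ k) hjb
          · exact d1
          · rw [show det2 (p (σ i)) (p (σ k)) (p (σ j)) = - det2 (p (σ i)) (p (σ j)) (p (σ k))
              from by rw [det2_swap23]]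
            linarith
          · rw [show det2 (p (σ k)) (p b₀) (p (σ j)) = det2 (p b₀) (p (σ j)) (p (σ k))
              from by rw [det2_rot, det2_rot]]
            exact d2
        · exact hpos
end OrderSec


variable {α : Type*} [LinearOrder α]

def PCross (e f : α × α) : Prop :=
  (e.1 < f.1 ∧ f.1 < e.2 ∧ e.2 < f.2) ∨ (f.1 < e.1 ∧ e.1 < f.2 ∧ f.2 < e.2)

def PDiag (S : Finset α) (e : α × α) : Prop :=
  e.1 ∈ S ∧ e.2 ∈ S ∧ (∃ s ∈ S, e.1 < s ∧ s < e.2) ∧ (∃ s ∈ S, s < e.1 ∨ e.2 < s)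

noncomputable def Addable (S : Finset α) (A : Finset (α × α)) : Finset (α × α) :=
  (S ×ˢ S).filter (fun e => PDiag S e ∧ e ∉ A ∧ ∀ f ∈ A, ¬ PCross e f)

lemma lemmaC : ∀ (A : Finset (α × α)) (S : Finset α),
    (∀ e ∈ A, PDiag S e) → (∀ e ∈ A, ∀ f ∈ A, e ≠ f → ¬ PCross e f) →
    2 * (S.card : ℤ) - 6 - 2 * (A.card : ℤ) ≤ ((Addable S A).card : ℤ) := by
  intro A
  induction A using Finset.strongInduction with
  | _ A ih =>
  intro S hA hNC
  rcases A.eq_empty_or_nonempty with rfl | hAne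
  · -- base case
    simp only [Finset.card_empty, Nat.cast_zero, mul_zero, sub_zero]
    by_cases hS : 4 ≤ S.card
    case neg =>
      have hle : S.card ≤ 3 := by omega
      have h0 : (0:ℤ) ≤ ((Addable S ∅).card : ℤ) := Int.ofNat_nonneg _
      have : (S.card : ℤ) ≤ 3 := by exact_mod_cast hle
      linarith
    case pos =>
      have hSne : S.Nonempty := Finset.card_pos.1 (by omega)
      set m0 := S.min' hSne with hm0
      set M0 := S.max' hSne with hM0
      have hm0S : m0 ∈ S := S.min'_mem hSne
      have hM0S : M0 ∈ S := S.max'_mem hSne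
      have hS1ne : (S.erase m0).Nonempty := by
        rw [← Finset.card_pos, Finset.card_erase_of_mem hm0S]; omega
      have hS2ne : (S.erase M0).Nonempty := by
        rw [← Finset.card_pos, Finset.card_erase_of_mem hM0S]; omega
      set m1 := (S.erase m0).min' hS1ne with hm1
      set M1 := (S.erase M0).max' hS2ne with hM1
      have hm1S : m1 ∈ S := Finset.mem_of_mem_erase ((S.erase m0).min'_mem hS1ne)
      have hM1S : M1 ∈ S := Finset.mem_of_mem_erase ((S.erase M0).max'_mem hS2ne)
      have hm1ne : m1 ≠ m0 := Finset.ne_of_mem_erase ((S.erase m0).min'_mem hS1ne)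
      have hM1ne : M1 ≠ M0 := Finset.ne_of_mem_erase ((S.erase M0).max'_mem hS2ne)
      have hm0m1 : m0 < m1 := lt_of_le_of_ne (S.min'_le m1 hm1S) (Ne.symm hm1ne)
      set F1 := (S \ {m0, m1, M0}).image (fun u => (m0, u)) with hF1
      set F2 := (S \ {m0, M1, M0}).image (fun u => (u, M0)) with hF2
      have hF1mem : F1 ⊆ Addable S ∅ := by
        intro e he
        rw [hF1, Finset.mem_image] at he
        obtain ⟨u, hu, rfl⟩ := he
        rw [Finset.mem_sdiff] at hu
        obtain ⟨huS, hu3⟩ := hu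
        simp only [Finset.mem_insert, Finset.mem_singleton, not_or] at hu3
        obtain ⟨hu0, hu1, hu2⟩ := hu3
        rw [Addable, Finset.mem_filter]
        refine ⟨Finset.mem_product.2 ⟨hm0S, huS⟩, ⟨hm0S, huS, ⟨m1, hm1S, hm0m1, ?_⟩,
          ⟨M0, hM0S, Or.inr ?_⟩⟩, by simp, by simp⟩
        · exact lt_of_le_of_ne ((S.erase m0).min'_le u (Finset.mem_erase.2 ⟨hu0, huS⟩))
            (Ne.symm hu1)
        · exact lt_of_le_of_ne (S.le_max' u huS) hu2
      have hF2mem : F2 ⊆ Addable S ∅ := by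
        intro e he
        rw [hF2, Finset.mem_image] at he
        obtain ⟨u, hu, rfl⟩ := he
        rw [Finset.mem_sdiff] at hu
        obtain ⟨huS, hu3⟩ := hu
        simp only [Finset.mem_insert, Finset.mem_singleton, not_or] at hu3
        obtain ⟨hu0, hu1, hu2⟩ := hu3
        rw [Addable, Finset.mem_filter]
        have hM1M0 : M1 < M0 := lt_of_le_of_ne (S.le_max' M1 hM1S) hM1ne
        refine ⟨Finset.mem_product.2 ⟨huS, hM0S⟩, ⟨huS, hM0S, ⟨M1, hM1S, ?_, hM1M0⟩,
          ⟨m0, hm0S, Or.inl ?_⟩⟩, by simp, by simp⟩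
        · exact lt_of_le_of_ne ((S.erase M0).le_max' u (Finset.mem_erase.2 ⟨hu2, huS⟩)) hu1
        · exact lt_of_le_of_ne (S.min'_le u huS) (Ne.symm hu0)
      have hdis : Disjoint F1 F2 := by
        rw [Finset.disjoint_left]
        intro e he1 he2
        rw [hF1, Finset.mem_image] at he1
        rw [hF2, Finset.mem_image] at he2
        obtain ⟨u, hu, he⟩ := he1
        obtain ⟨u', hu', he'⟩ := he2
        rw [Finset.mem_sdiff] at hu
        simp only [Finset.mem_insert, Finset.mem_singleton, not_or] at hu
        have : e.2 = u := by rw [← he]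
        have h2 : e.2 = M0 := by rw [← he']
        exact hu.2.2.2 (this.symm.trans h2)
      have hcard3 : ∀ a b c : α, ({a, b, c} : Finset α).card ≤ 3 := by
        intro a b c
        apply le_trans (Finset.card_insert_le _ _)
        have := Finset.card_insert_le b ({c} : Finset α)
        simp only [Finset.card_singleton] at this
        omega
      have hF1card : S.card - 3 ≤ F1.card := by
        rw [hF1, Finset.card_image_of_injective _ (fun a b h => (Prod.mk.injEq m0 a m0 b ▸ h : m0 = m0 ∧ a = b).2)]
        have h1 := Finset.card_le_card_sdiff_add_card (s := S) (t := ({m0, m1, M0} : Finset α))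
        have h2 := hcard3 m0 m1 M0
        omega
      have hF2card : S.card - 3 ≤ F2.card := by
        rw [hF2, Finset.card_image_of_injective _ (fun a b h => (Prod.mk.injEq a M0 b M0 ▸ h : a = b ∧ M0 = M0).1)]
        have h1 := Finset.card_le_card_sdiff_add_card (s := S) (t := ({m0, M1, M0} : Finset α))
        have h2 := hcard3 m0 M1 M0
        omega
      have hunion : F1 ∪ F2 ⊆ Addable S ∅ := Finset.union_subset hF1mem hF2mem
      have hc := Finset.card_le_card hunion
      rw [Finset.card_union_of_disjoint hdis] at hc
      have h1 : (S.card : ℤ) - 3 ≤ (F1.card : ℤ) := by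
        have := Int.ofNat_le.2 hF1card; push_cast at this ⊢; omega
      have h2 : (S.card : ℤ) - 3 ≤ (F2.card : ℤ) := by
        have := Int.ofNat_le.2 hF2card; push_cast at this ⊢; omega
      have h3 : (F1.card : ℤ) + (F2.card : ℤ) ≤ ((Addable S ∅).card : ℤ) := by
        exact_mod_cast hc
      linarith
  · -- inductive step
    set tf : (α × α) → ℕ := fun e => (S.filter (fun s => e.1 < s ∧ s < e.2)).card with htf
    obtain ⟨e₀, he₀A, he₀min⟩ := A.exists_min_image tf hAne
    obtain ⟨hxS, hyS, ⟨s₀, hs₀S, hs₀1, hs₀2⟩, -⟩ := hA e₀ he₀A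
    set x := e₀.1 with hxdef
    set y := e₀.2 with hydef
    set I := S.filter (fun s => x < s ∧ s < y) with hIdef
    have hIsub : I ⊆ S := Finset.filter_subset _ _
    have hInon : I.Nonempty := ⟨s₀, Finset.mem_filter.2 ⟨hs₀S, hs₀1, hs₀2⟩⟩
    have hxy : x < y := lt_trans hs₀1 hs₀2
    have htfI : tf e₀ = I.card := rfl
    -- no other chord of A has an endpoint strictly inside (x,y)
    have hnoend : ∀ f ∈ A, f ≠ e₀ → f.1 ∉ I ∧ f.2 ∉ I := by
      intro f hfA hfne
      have hf12 : f.1 < f.2 := by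
        obtain ⟨-, -, ⟨s, -, h1, h2⟩, -⟩ := hA f hfA
        exact lt_trans h1 h2
      have hcard : ∀ z : α, z ∈ I → (S.filter (fun s => f.1 < s ∧ s < f.2)) ⊆ I.erase z → False := by
        intro z hzI hsub
        have h1 : tf f ≤ I.card - 1 := by
          have := Finset.card_le_card hsub
          rw [Finset.card_erase_of_mem hzI] at this
          exact this
        have h2 := he₀min f hfA
        have h3 : 1 ≤ I.card := Finset.card_pos.2 ⟨z, hzI⟩
        rw [htfI] at h2
        omega
      constructor
      · intro hmem
        have hm := Finset.mem_filter.1 hmem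
        obtain ⟨hf1S, hxf1, hf1y⟩ := hm
        rcases le_or_gt f.2 y with hf2y | hf2y
        · apply hcard f.1 hmem
          intro s hs
          rw [Finset.mem_filter] at hs
          obtain ⟨hsS, h1, h2⟩ := hs
          rw [Finset.mem_erase, hIdef, Finset.mem_filter]
          exact ⟨ne_of_gt h1, hsS, lt_trans hxf1 h1, lt_of_lt_of_le h2 hf2y⟩
        · exact hNC e₀ he₀A f hfA (Ne.symm hfne) (Or.inl ⟨hxf1, hf1y, hf2y⟩)
      · intro hmem
        have hm := Finset.mem_filter.1 hmem
        obtain ⟨hf2S, hxf2, hf2y⟩ := hm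
        rcases le_or_gt x f.1 with hxf1 | hxf1
        · apply hcard f.2 hmem
          intro s hs
          rw [Finset.mem_filter] at hs
          obtain ⟨hsS, h1, h2⟩ := hs
          rw [Finset.mem_erase, hIdef, Finset.mem_filter]
          exact ⟨ne_of_lt h2, hsS, lt_of_le_of_lt hxf1 h1, lt_trans h2 hf2y⟩
        · exact hNC e₀ he₀A f hfA (Ne.symm hfne) (Or.inr ⟨hxf1, hxf2, hf2y⟩)
    set S' := S \ I with hS'def
    set A' := A.erase e₀ with hA'def
    have hxS' : x ∈ S' := by
      rw [hS'def, Finset.mem_sdiff]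
      exact ⟨hxS, fun h => (Finset.mem_filter.1 h).2.1.false⟩
    have hyS' : y ∈ S' := by
      rw [hS'def, Finset.mem_sdiff]
      exact ⟨hyS, fun h => (Finset.mem_filter.1 h).2.2.false⟩
    have hA'sub : A' ⊂ A := Finset.erase_ssubset he₀A
    have hA' : ∀ f ∈ A', PDiag S' f := by
      intro f hf
      obtain ⟨hfne, hfA⟩ := Finset.mem_erase.1 hf
      obtain ⟨hend1, hend2⟩ := hnoend f hfA hfne
      obtain ⟨hf1S, hf2S, ⟨s0, hs0S, hs01, hs02⟩, ⟨s1, hs1S, hs1c⟩⟩ := hA f hfA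
      have hf1S' : f.1 ∈ S' := Finset.mem_sdiff.2 ⟨hf1S, hend1⟩
      have hf2S' : f.2 ∈ S' := Finset.mem_sdiff.2 ⟨hf2S, hend2⟩
      refine ⟨hf1S', hf2S', ?_, ?_⟩
      · -- interior in S'
        by_cases hs0I : s0 ∈ I
        case neg => exact ⟨s0, Finset.mem_sdiff.2 ⟨hs0S, hs0I⟩, hs01, hs02⟩
        case pos =>
          obtain ⟨-, hs0x, hs0y⟩ := Finset.mem_filter.1 hs0I
          rcases lt_or_ge f.1 x with hfx | hfx
          · exact ⟨x, hxS', hfx, lt_trans hs0x hs02⟩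
          · have hf1x : f.1 = x := by
              by_contra hne
              have h1 : x < f.1 := lt_of_le_of_ne hfx (Ne.symm hne)
              have h2 : f.1 < y := lt_trans hs01 hs0y
              exact hend1 (Finset.mem_filter.2 ⟨hf1S, h1, h2⟩)
            have hf2y : y < f.2 := by
              by_contra hle
              push_neg at hle
              rcases lt_or_eq_of_le hle with h | h
              · exact hend2 (Finset.mem_filter.2 ⟨hf2S, lt_trans hs0x hs02, h⟩)
              · exact hfne (Prod.ext hf1x h)
            exact ⟨y, hyS', hf1x ▸ hxy, hf2y⟩
      · -- exterior in S'
        by_cases hs1I : s1 ∈ I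
        case neg => exact ⟨s1, Finset.mem_sdiff.2 ⟨hs1S, hs1I⟩, hs1c⟩
        case pos =>
          obtain ⟨-, hs1x, hs1y⟩ := Finset.mem_filter.1 hs1I
          rcases hs1c with h | h
          · exact ⟨x, hxS', Or.inl (lt_trans hs1x h)⟩
          · exact ⟨y, hyS', Or.inr (lt_trans h hs1y)⟩
    have hNC' : ∀ e ∈ A', ∀ f ∈ A', e ≠ f → ¬ PCross e f := by
      intro e he f hf
      exact hNC e (Finset.mem_of_mem_erase he) f (Finset.mem_of_mem_erase hf)
    have IH := ih A' hA'sub S' hA' hNC'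
    -- Addable S' A' ⊆ Addable S A
    have hsubAdd : Addable S' A' ⊆ Addable S A := by
      intro e he
      rw [Addable, Finset.mem_filter] at he
      obtain ⟨hprod, ⟨he1, he2, ⟨s0, hs0, hs0c⟩, ⟨s1, hs1, hs1c⟩⟩, henA, hncr⟩ := he
      have he1S : e.1 ∈ S := (Finset.mem_sdiff.1 he1).1
      have he2S : e.2 ∈ S := (Finset.mem_sdiff.1 he2).1
      have he1I : e.1 ∉ I := (Finset.mem_sdiff.1 he1).2
      have he2I : e.2 ∉ I := (Finset.mem_sdiff.1 he2).2
      rw [Addable, Finset.mem_filter]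
      refine ⟨Finset.mem_product.2 ⟨he1S, he2S⟩,
        ⟨he1S, he2S, ⟨s0, (Finset.mem_sdiff.1 hs0).1, hs0c⟩,
          ⟨s1, (Finset.mem_sdiff.1 hs1).1, hs1c⟩⟩, ?_, ?_⟩
      · intro heA
        rcases eq_or_ne e e₀ with rfl | hne
        · exact (Finset.mem_sdiff.1 hs0).2 (Finset.mem_filter.2
            ⟨(Finset.mem_sdiff.1 hs0).1, hs0c.1, hs0c.2⟩)
        · exact henA (Finset.mem_erase.2 ⟨hne, heA⟩)
      · intro f hfA hcr
        rcases eq_or_ne f e₀ with rfl | hne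
        · rcases hcr with ⟨h1, h2, h3⟩ | ⟨h1, h2, h3⟩
          · exact he2I (Finset.mem_filter.2 ⟨he2S, h2, h3⟩)
          · exact he1I (Finset.mem_filter.2 ⟨he1S, h1, h2⟩)
        · exact hncr f (Finset.mem_erase.2 ⟨hne, hfA⟩) hcr
    set Im := I.min' hInon with hImdef
    set IM := I.max' hInon with hIMdef
    have hImI : Im ∈ I := I.min'_mem hInon
    have hIMI : IM ∈ I := I.max'_mem hInon
    have hImx : x < Im := (Finset.mem_filter.1 hImI).2.1
    have hIMy : IM < y := (Finset.mem_filter.1 hIMI).2.2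
    set X1 := (I.erase Im).image (fun i => (x, i)) with hX1def
    set X2 := (I.erase IM).image (fun i => (i, y)) with hX2def
    have hXmemI : ∀ i ∈ I, ∀ f ∈ A, f.1 ∉ Set.Ioo x y ∧ f.2 ∉ Set.Ioo x y ∨ f = e₀ := by
      intro i hi f hf
      rcases eq_or_ne f e₀ with rfl | hne
      · exact Or.inr rfl
      · obtain ⟨h1, h2⟩ := hnoend f hf hne
        obtain ⟨hf1S, hf2S, -, -⟩ := hA f hf
        refine Or.inl ⟨fun hm => h1 (Finset.mem_filter.2 ⟨hf1S, hm.1, hm.2⟩),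
          fun hm => h2 (Finset.mem_filter.2 ⟨hf2S, hm.1, hm.2⟩)⟩
    have hX1mem : X1 ⊆ Addable S A := by
      intro e he
      rw [hX1def, Finset.mem_image] at he
      obtain ⟨i, hi, rfl⟩ := he
      obtain ⟨hiIm, hiI⟩ := Finset.mem_erase.1 hi
      obtain ⟨hiS, hxi, hiy⟩ := Finset.mem_filter.1 hiI
      have hImi : Im < i := lt_of_le_of_ne (I.min'_le i hiI) (Ne.symm hiIm)
      rw [Addable, Finset.mem_filter]
      refine ⟨Finset.mem_product.2 ⟨hxS, hiS⟩,
        ⟨hxS, hiS, ⟨Im, hIsub hImI, hImx, hImi⟩, ⟨y, hyS, Or.inr hiy⟩⟩, ?_, ?_⟩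
      · intro hmem
        have hne : (x, i) ≠ e₀ := by
          intro h
          have : i = y := congrArg Prod.snd h
          exact absurd (this ▸ hiy) (lt_irrefl y)
        exact (hnoend (x, i) hmem hne).2 hiI
      · intro f hfA hcr
        rcases hcr with ⟨h1, h2, h3⟩ | ⟨h1, h2, h3⟩
        · -- x < f.1 < i < f.2 : f.1 strictly inside (x,y)
          rcases eq_or_ne f e₀ with rfl | hne
          · exact absurd h1 (lt_irrefl x)
          · exact (hnoend f hfA hne).1 (Finset.mem_filter.2
              ⟨(hA f hfA).1, h1, lt_trans h2 hiy⟩)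
        · -- f.1 < x < f.2 < i
          rcases eq_or_ne f e₀ with rfl | hne
          · exact absurd (lt_trans h3 hiy) (lt_irrefl y)
          · exact (hnoend f hfA hne).2 (Finset.mem_filter.2
              ⟨(hA f hfA).2.1, h2, lt_trans h3 hiy⟩)
    have hX2mem : X2 ⊆ Addable S A := by
      intro e he
      rw [hX2def, Finset.mem_image] at he
      obtain ⟨i, hi, rfl⟩ := he
      obtain ⟨hiIM, hiI⟩ := Finset.mem_erase.1 hi
      obtain ⟨hiS, hxi, hiy⟩ := Finset.mem_filter.1 hiI
      have hiIM' : i < IM := lt_of_le_of_ne (I.le_max' i hiI) hiIM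
      rw [Addable, Finset.mem_filter]
      refine ⟨Finset.mem_product.2 ⟨hiS, hyS⟩,
        ⟨hiS, hyS, ⟨IM, hIsub hIMI, hiIM', hIMy⟩, ⟨x, hxS, Or.inl hxi⟩⟩, ?_, ?_⟩
      · intro hmem
        have hne : (i, y) ≠ e₀ := by
          intro h
          have : i = x := congrArg Prod.fst h
          exact absurd (this ▸ hxi) (lt_irrefl x)
        exact (hnoend (i, y) hmem hne).1 hiI
      · intro f hfA hcr
        rcases hcr with ⟨h1, h2, h3⟩ | ⟨h1, h2, h3⟩
        · -- i < f.1 < y < f.2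
          rcases eq_or_ne f e₀ with rfl | hne
          · exact absurd (lt_trans hxi h1) (lt_irrefl x)
          · exact (hnoend f hfA hne).1 (Finset.mem_filter.2
              ⟨(hA f hfA).1, lt_trans hxi h1, h2⟩)
        · -- f.1 < i < f.2 < y
          rcases eq_or_ne f e₀ with rfl | hne
          · exact absurd h3 (lt_irrefl y)
          · exact (hnoend f hfA hne).2 (Finset.mem_filter.2
              ⟨(hA f hfA).2.1, lt_trans hxi h2, h3⟩)
    -- disjointness
    have hd12 : Disjoint X1 X2 := by
      rw [Finset.disjoint_left]
      intro e he1 he2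
      rw [hX1def, Finset.mem_image] at he1
      rw [hX2def, Finset.mem_image] at he2
      obtain ⟨i, hi, rfl⟩ := he1
      obtain ⟨j, hj, hej⟩ := he2
      have h2 : i = y := by
        have := congrArg Prod.snd hej
        simpa using this.symm
      obtain ⟨-, hiI⟩ := Finset.mem_erase.1 hi
      exact absurd (h2 ▸ (Finset.mem_filter.1 hiI).2.2) (lt_irrefl y)
    have hd1 : Disjoint X1 (Addable S' A') := by
      rw [Finset.disjoint_left]
      intro e he1 he2
      rw [hX1def, Finset.mem_image] at he1
      obtain ⟨i, hi, rfl⟩ := he1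
      rw [Addable, Finset.mem_filter] at he2
      have := (Finset.mem_product.1 he2.1).2
      exact (Finset.mem_sdiff.1 this).2 (Finset.mem_of_mem_erase hi)
    have hd2 : Disjoint X2 (Addable S' A') := by
      rw [Finset.disjoint_left]
      intro e he1 he2
      rw [hX2def, Finset.mem_image] at he1
      obtain ⟨i, hi, rfl⟩ := he1
      rw [Addable, Finset.mem_filter] at he2
      have := (Finset.mem_product.1 he2.1).1
      exact (Finset.mem_sdiff.1 this).2 (Finset.mem_of_mem_erase hi)
    -- cardinalities
    have hX1card : X1.card = I.card - 1 := by
      rw [hX1def, Finset.card_image_of_injective _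
        (fun a b h => (Prod.mk.injEq x a x b ▸ h : x = x ∧ a = b).2),
        Finset.card_erase_of_mem hImI]
    have hX2card : X2.card = I.card - 1 := by
      rw [hX2def, Finset.card_image_of_injective _
        (fun a b h => (Prod.mk.injEq a y b y ▸ h : a = b ∧ y = y).1),
        Finset.card_erase_of_mem hIMI]
    have hS'card : S'.card = S.card - I.card := by
      rw [hS'def, Finset.card_sdiff_of_subset hIsub]
    have hA'card : A'.card = A.card - 1 := by
      rw [hA'def, Finset.card_erase_of_mem he₀A]
    have hIcardS : I.card ≤ S.card := Finset.card_le_card hIsub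
    have hAcard1 : 1 ≤ A.card := Finset.card_pos.2 hAne
    have hIcard1 : 1 ≤ I.card := Finset.card_pos.2 hInon
    have hbig : X1 ∪ (X2 ∪ Addable S' A') ⊆ Addable S A :=
      Finset.union_subset hX1mem (Finset.union_subset hX2mem hsubAdd)
    have hcards : X1.card + (X2.card + (Addable S' A').card) ≤ (Addable S A).card := by
      have h1 := Finset.card_le_card hbig
      rw [Finset.card_union_of_disjoint (by
          rw [Finset.disjoint_union_right]; exact ⟨hd12, hd1⟩),
        Finset.card_union_of_disjoint hd2] at h1
      exact h1
    have hIH' : 2 * ((S.card - I.card : ℕ) : ℤ) - 6 - 2 * ((A.card - 1 : ℕ) : ℤ)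
        ≤ ((Addable S' A').card : ℤ) := by
      rw [← hS'card, ← hA'card]; exact IH
    have hcast1 : ((S.card - I.card : ℕ) : ℤ) = (S.card : ℤ) - (I.card : ℤ) := by
      omega
    have hcast2 : ((A.card - 1 : ℕ) : ℤ) = (A.card : ℤ) - 1 := by omega
    have hcast3 : (X1.card : ℤ) = (I.card : ℤ) - 1 := by omega
    have hcast4 : (X2.card : ℤ) = (I.card : ℤ) - 1 := by omega
    have hfinal : (X1.card : ℤ) + ((X2.card : ℤ) + ((Addable S' A').card : ℤ))
        ≤ ((Addable S A).card : ℤ) := by exact_mod_cast hcards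
    rw [hcast1, hcast2] at hIH'
    linarith

section App
variable {n : ℕ} {p : Fin n → Pt} {σ : Fin n → Fin n}

/-- positively oriented quadruple sign lemmas -/
lemma mutual_of_pcross (hgen : GenPos p) (hσ : Function.Bijective σ)
    (htrip : ∀ i j k : Fin n, i < j → j < k → 0 < det2 (p (σ i)) (p (σ j)) (p (σ k)))
    {a b c d : Fin n} (hab : a < b) (hcd : c < d) (hcr : PCross (a, b) (c, d)) :
    SegCross (p (σ a)) (p (σ b)) (p (σ c)) (p (σ d)) := by
  set A := p (σ a); set B := p (σ b); set C := p (σ c); set D := p (σ d)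
  apply signs_segCross
  · -- det2 C D A * det2 C D B < 0
    rcases hcr with ⟨h1, h2, h3⟩ | ⟨h1, h2, h3⟩
    · -- a < c < b < d
      have d1 : 0 < det2 A C D := htrip a c d h1 (lt_trans h2 h3)
      have d2 : 0 < det2 C B D := htrip c b d h2 h3
      have e1 : det2 C D A = det2 A C D := by rw [det2_rot, det2_rot]
      have e2 : det2 C D B = - det2 C B D := by rw [det2_swap23]
      rw [e1, e2]; nlinarith
    · -- c < a < d < b
      have d1 : 0 < det2 C A D := htrip c a d h1 h2
      have d2 : 0 < det2 C D B := htrip c d b (lt_trans h1 h2) h3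
      have e1 : det2 C D A = - det2 C A D := by rw [det2_swap23]
      rw [e1]; nlinarith
  · rcases hcr with ⟨h1, h2, h3⟩ | ⟨h1, h2, h3⟩
    · -- a < c < b < d
      have d1 : 0 < det2 A C B := htrip a c b h1 h2
      have d2 : 0 < det2 A B D := htrip a b d (lt_trans h1 h2) h3
      have e1 : det2 A B C = - det2 A C B := by rw [det2_swap23]
      rw [e1]; nlinarith
    · -- c < a < d < b
      have d1 : 0 < det2 C A B := htrip c a b h1 (lt_trans h2 h3)
      have d2 : 0 < det2 A D B := htrip a d b h2 h3
      have e1 : det2 A B C = det2 C A B := by rw [det2_rot, det2_rot]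
      have e2 : det2 A B D = - det2 A D B := by rw [det2_swap23]
      rw [e1, e2]; nlinarith

lemma pcross_of_cross (hgen : GenPos p) (hσ : Function.Bijective σ)
    (htrip : ∀ i j k : Fin n, i < j → j < k → 0 < det2 (p (σ i)) (p (σ j)) (p (σ k)))
    {a b c d : Fin n} (hab : a < b) (hcd : c < d)
    (h1 : a ≠ c) (h2 : a ≠ d) (h3 : b ≠ c) (h4 : b ≠ d)
    (hcr : SegCross (p (σ a)) (p (σ b)) (p (σ c)) (p (σ d))) :
    PCross (a, b) (c, d) := by
  have hinj := hσ.1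
  have hne : ∀ {i j k : Fin n}, i ≠ j → i ≠ k → j ≠ k →
      det2 (p (σ i)) (p (σ j)) (p (σ k)) ≠ 0 := by
    intro i j k g1 g2 g3
    exact det2_ne hgen (fun h => g1 (hinj h)) (fun h => g2 (hinj h)) (fun h => g3 (hinj h))
  have habne : a ≠ b := ne_of_lt hab
  have hcdne : c ≠ d := ne_of_lt hcd
  obtain ⟨s1, s2⟩ := segCross_signs hcr
    (hne hcdne (Ne.symm h1) (Ne.symm h2)) (hne hcdne (Ne.symm h3) (Ne.symm h4))
    (hne habne h1 h3) (hne habne h2 h4)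
  set A := p (σ a); set B := p (σ b); set C := p (σ c); set D := p (σ d)
  -- case analysis on relative order
  rcases lt_or_gt_of_ne h3 with hbc | hcb
  · -- a < b < c < d : contradiction
    exfalso
    have d1 : 0 < det2 A C D := htrip a c d (lt_trans hab hbc) hcd
    have d2 : 0 < det2 B C D := htrip b c d hbc hcd
    have e1 : det2 C D A = det2 A C D := by rw [det2_rot, det2_rot]
    have e2 : det2 C D B = det2 B C D := by rw [det2_rot, det2_rot]
    rw [e1, e2] at s1; nlinarith
  · rcases lt_or_gt_of_ne h2 with had | hda
    · -- a < d and c < b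
      rcases lt_or_gt_of_ne h1 with hac | hca
      · -- a < c < b; compare b d
        rcases lt_or_gt_of_ne h4 with hbd | hdb
        · exact Or.inl ⟨hac, hcb, hbd⟩
        · -- a < c < d < b : nested, contradiction via s2
          exfalso
          have d1 : 0 < det2 A C B := htrip a c b hac hcb
          have d2 : 0 < det2 A D B := htrip a d b had hdb
          have e1 : det2 A B C = - det2 A C B := by rw [det2_swap23]
          have e2 : det2 A B D = - det2 A D B := by rw [det2_swap23]
          rw [e1, e2] at s2; nlinarith
      · -- c < a < d; compare d b
        rcases lt_or_gt_of_ne h4 with hbd | hdb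
        · -- c < a < b < d nested, contradiction via s1
          exfalso
          have d1 : 0 < det2 C A D := htrip c a d hca had
          have d2 : 0 < det2 C B D := htrip c b d hcb hbd
          have e1 : det2 C D A = - det2 C A D := by rw [det2_swap23]
          have e2 : det2 C D B = - det2 C B D := by rw [det2_swap23]
          rw [e1, e2] at s1; nlinarith
        · exact Or.inr ⟨hca, had, hdb⟩
    · -- d < a : c < d < a < b contradiction
      exfalso
      have d1 : 0 < det2 C D A := htrip c d a hcd hda
      have d2 : 0 < det2 C D B := htrip c d b hcd (lt_trans hda hab)
      nlinarith

end App

section App2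
variable {n : ℕ} {G : SimpleGraph (Fin n)} {p : Fin n → Pt} {φ : Sym2 (Fin n) → Fin 3}


lemma no_shared (hgen : GenPos p) {a b c d : Fin n} (hab : a ≠ b) (hcd : c ≠ d)
    (hne : s(a, b) ≠ s(c, d)) (hsh : a = c ∨ a = d ∨ b = c ∨ b = d) :
    ¬ SegCross (p a) (p b) (p c) (p d) := by
  rcases hsh with rfl | rfl | rfl | rfl
  · have hbd : b ≠ d := by
      intro h; exact hne (by rw [h])
    exact not_segCross_shared (det2_ne hgen hab hcd hbd)
  · have hbc : b ≠ c := by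
      intro h; exact hne (by rw [h]; exact Sym2.eq_swap)
    intro hcr
    exact not_segCross_shared (det2_ne hgen hab (Ne.symm hcd) hbc)
      (segCross_swap_right.1 hcr)
  · have had : a ≠ d := by
      intro h; exact hne (by rw [h]; exact Sym2.eq_swap)
    intro hcr
    exact not_segCross_shared (det2_ne hgen (Ne.symm hab) hcd had)
      (segCross_swap_left.1 hcr)
  · have hac : a ≠ c := by
      intro h; exact hne (by rw [h])
    intro hcr
    exact not_segCross_shared (det2_ne hgen (Ne.symm hab) (Ne.symm hcd) hac)
      (segCross_swap_right.1 (segCross_swap_left.1 hcr))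

/-- From saturation, for a non-edge u,v and any color c obtain a G-edge of color c
crossing the segment, with all four endpoints distinct. -/
lemma sat_extract (hgen : GenPos p) (hφ : CrossingFree G p φ)
    (hsat : PrecoloredSaturated G p φ) {u v : Fin n} (huv : u ≠ v)
    (hne : s(u, v) ∉ G.edgeSet) (c : Fin 3) :
    ∃ w z : Fin n, s(w, z) ∈ G.edgeSet ∧ φ s(w, z) = c ∧
      SegCross (p u) (p v) (p w) (p z) ∧ w ≠ u ∧ w ≠ v ∧ z ≠ u ∧ z ≠ v ∧ w ≠ z := by
  have hnadj : ¬ G.Adj u v := fun h => hne ((SimpleGraph.mem_edgeSet G).2 h)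
  have hns := hsat u v huv hnadj c
  unfold CrossingFree at hns
  push_neg at hns
  obtain ⟨e, he, f, hf, hef, hcol, hcr⟩ := hns
  rw [SimpleGraph.edgeSet_sup, SimpleGraph.edgeSet_fromEdgeSet] at he hf
  have hmemcase : ∀ {g : Sym2 (Fin n)},
      g ∈ G.edgeSet ∪ ({s(u, v)} \ {e | e.IsDiag}) → g ∈ G.edgeSet ∨ g = s(u, v) := by
    intro g hg
    rcases hg with hg | hg
    · exact Or.inl hg
    · exact Or.inr hg.1
  -- exactly one of e, f equals s(u,v)
  have key : ∀ g : Sym2 (Fin n), g ∈ G.edgeSet → φ g = c →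
      EdgeCross p s(u, v) g → g ≠ s(u, v) →
      ∃ w z : Fin n, s(w, z) ∈ G.edgeSet ∧ φ s(w, z) = c ∧
        SegCross (p u) (p v) (p w) (p z) ∧ w ≠ u ∧ w ≠ v ∧ z ≠ u ∧ z ≠ v ∧ w ≠ z := by
    intro g hg hgc hcross hgne
    obtain ⟨a, b, w, z, hab, hwz, hseg⟩ := hcross
    -- {a,b} = {u,v}
    have hseg' : SegCross (p u) (p v) (p w) (p z) := by
      rcases Sym2.eq_iff.1 hab.symm with ⟨h1, h2⟩ | ⟨h1, h2⟩
      · rw [h1, h2] at hseg; exact hseg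
      · rw [h1, h2] at hseg; exact segCross_swap_left.2 hseg
    have hgwz : g = s(w, z) := hwz
    have hwzne : w ≠ z := by
      intro h
      rw [hgwz, h] at hg
      exact ((SimpleGraph.mem_edgeSet G).1 hg).ne rfl
    -- no shared endpoints
    have hsuvwz : s(u, v) ≠ s(w, z) := fun hh => hgne (hgwz.trans hh.symm)
    have hnosh := no_shared hgen huv hwzne hsuvwz
    have hdistinct : w ≠ u ∧ w ≠ v ∧ z ≠ u ∧ z ≠ v := by
      refine ⟨?_, ?_, ?_, ?_⟩
      · intro h; exact hnosh (Or.inl h.symm) hseg'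
      · intro h; exact hnosh (Or.inr (Or.inr (Or.inl h.symm))) hseg'
      · intro h; exact hnosh (Or.inr (Or.inl h.symm)) hseg'
      · intro h; exact hnosh (Or.inr (Or.inr (Or.inr h.symm))) hseg'
    exact ⟨w, z, hgwz ▸ hg, hgwz ▸ hgc, hseg', hdistinct.1, hdistinct.2.1,
      hdistinct.2.2.1, hdistinct.2.2.2, hwzne⟩
  rcases hmemcase he with heG | heU
  · rcases hmemcase hf with hfG | hfU
    · -- both old edges: contradicts crossing-freeness
      exfalso
      have hesuv : e ≠ s(u, v) := fun h => hne (h ▸ heG)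
      have hfsuv : f ≠ s(u, v) := fun h => hne (h ▸ hfG)
      rw [if_neg hesuv, if_neg hfsuv] at hcol
      exact hφ e heG f hfG hef hcol hcr
    · -- f = s(u,v)
      have hesuv : e ≠ s(u, v) := fun h => hne (h ▸ heG)
      rw [if_neg hesuv, if_pos hfU] at hcol
      apply key e heG hcol _ hesuv
      -- EdgeCross p s(u,v) e from EdgeCross p e f
      obtain ⟨a, b, w, z, hab, hwz, hseg⟩ := hcr
      exact ⟨w, z, a, b, hfU ▸ hwz, hab, segCross_comm.1 hseg⟩
  · -- e = s(u,v)
    have hfsuv : f ≠ s(u, v) := fun h => hef (heU.trans h.symm)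
    have hfG : f ∈ G.edgeSet := by
      rcases hmemcase hf with h | h
      · exact h
      · exact absurd h hfsuv
    rw [if_pos heU, if_neg hfsuv] at hcol
    exact key f hfG hcol.symm (heU ▸ hcr) hfsuv

end App2


section App3
variable {n : ℕ} {G : SimpleGraph (Fin n)} {p : Fin n → Pt} {φ : Sym2 (Fin n) → Fin 3}
  {σ : Fin n → Fin n}

lemma force_pair (hgen : GenPos p) (hφ : CrossingFree G p φ)
    (hsat : PrecoloredSaturated G p φ) (hσ : Function.Bijective σ)
    (htrip : ∀ i j k : Fin n, i < j → j < k → 0 < det2 (p (σ i)) (p (σ j)) (p (σ k)))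
    {a b : Fin n} (hab : a < b) (hnedge : s(σ a, σ b) ∉ G.edgeSet) (c : Fin 3) :
    ∃ w z : Fin n, w < z ∧ s(σ w, σ z) ∈ G.edgeSet ∧ φ s(σ w, σ z) = c ∧
      PCross ((a, b) : Fin n × Fin n) (w, z) := by
  have huv : σ a ≠ σ b := fun h => (ne_of_lt hab) (hσ.1 h)
  obtain ⟨w', z', hedge, hcol, hseg, hwu, hwv, hzu, hzv, hwz⟩ :=
    sat_extract hgen hφ hsat huv hnedge c
  obtain ⟨w, rfl⟩ := hσ.2 w'
  obtain ⟨z, rfl⟩ := hσ.2 z'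
  have hwa : w ≠ a := fun h => hwu (congrArg σ h)
  have hwb : w ≠ b := fun h => hwv (congrArg σ h)
  have hza : z ≠ a := fun h => hzu (congrArg σ h)
  have hzb : z ≠ b := fun h => hzv (congrArg σ h)
  have hwzi : w ≠ z := fun h => hwz (congrArg σ h)
  rcases lt_or_gt_of_ne hwzi with h | h
  · exact ⟨w, z, h, hedge, hcol,
      pcross_of_cross hgen hσ htrip hab h (Ne.symm hwa) (Ne.symm hza) (Ne.symm hwb)
        (Ne.symm hzb) hseg⟩
  · refine ⟨z, w, h, ?_, ?_, ?_⟩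
    · rw [Sym2.eq_swap]; exact hedge
    · rw [Sym2.eq_swap]; exact hcol
    · exact pcross_of_cross hgen hσ htrip hab h (Ne.symm hza) (Ne.symm hwa) (Ne.symm hzb)
        (Ne.symm hwb) (segCross_swap_right.1 hseg)

lemma main_count (hn : 3 ≤ n) (hgen : GenPos p) (hφ : CrossingFree G p φ)
    (hsat : PrecoloredSaturated G p φ) (hσ : Function.Bijective σ)
    (htrip : ∀ i j k : Fin n, i < j → j < k → 0 < det2 (p (σ i)) (p (σ j)) (p (σ k))) :
    2 * (G.edgeSet.ncard : ℤ) ≥ 5 * (n : ℤ) - 12 := by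
  classical
  set S : Finset (Fin n) := Finset.univ with hS
  have hScard : S.card = n := by rw [hS, Finset.card_univ, Fintype.card_fin]
  set ι : (Fin n × Fin n) → Sym2 (Fin n) := fun e => s(σ e.1, σ e.2) with hι
  set Af : Fin 3 → Finset (Fin n × Fin n) :=
    fun c => (S ×ˢ S).filter (fun e => PDiag S e ∧ ι e ∈ G.edgeSet ∧ φ (ι e) = c) with hAf
  have hAmem : ∀ c e, e ∈ Af c ↔ PDiag S e ∧ ι e ∈ G.edgeSet ∧ φ (ι e) = c := by
    intro c e
    rw [hAf, Finset.mem_filter]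
    constructor
    · exact fun h => h.2
    · intro h
      exact ⟨Finset.mem_product.2 ⟨Finset.mem_univ _, Finset.mem_univ _⟩, h⟩
  have hpdlt : ∀ (e : Fin n × Fin n), PDiag S e → e.1 < e.2 := by
    intro e pd
    obtain ⟨-, -, ⟨s, -, h1, h2⟩, -⟩ := pd
    exact lt_trans h1 h2
  have hAc : ∀ c, ∀ e ∈ Af c, PDiag S e := fun c e he => ((hAmem c e).1 he).1
  have hNCc : ∀ c, ∀ e ∈ Af c, ∀ f ∈ Af c, e ≠ f → ¬ PCross e f := by
    intro c e he f hf hef hcr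
    obtain ⟨hpde, hede, hcole⟩ := (hAmem c e).1 he
    obtain ⟨hpdf, hedf, hcolf⟩ := (hAmem c f).1 hf
    have hlte := hpdlt e hpde
    have hltf := hpdlt f hpdf
    have hseg := mutual_of_pcross hgen hσ htrip hlte hltf hcr
    have hnes : ι e ≠ ι f := by
      intro h
      rcases Sym2.eq_iff.1 h with ⟨h1, h2⟩ | ⟨h1, h2⟩
      · exact hef (Prod.ext (hσ.1 h1) (hσ.1 h2))
      · have g1 : e.1 = f.2 := hσ.1 h1
        have g2 : e.2 = f.1 := hσ.1 h2
        rw [g1, g2] at hlte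
        exact lt_asymm hlte hltf
    exact hφ (ι e) hede (ι f) hedf hnes (hcole.trans hcolf.symm)
      ⟨σ e.1, σ e.2, σ f.1, σ f.2, rfl, rfl, hseg⟩
  -- hull edges are forced
  have hHull : ∀ e : Fin n × Fin n, e.1 < e.2 → ¬ PDiag S e → ι e ∈ G.edgeSet := by
    intro e hlt hnpd
    by_contra hnedge
    obtain ⟨w, z, hwz, hed, hcol, hcr⟩ :=
      force_pair hgen hφ hsat hσ htrip hlt hnedge 0
    apply hnpd
    rcases hcr with ⟨h1, h2, h3⟩ | ⟨h1, h2, h3⟩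
    · exact ⟨Finset.mem_univ _, Finset.mem_univ _, ⟨w, Finset.mem_univ _, h1, h2⟩,
        ⟨z, Finset.mem_univ _, Or.inr h3⟩⟩
    · exact ⟨Finset.mem_univ _, Finset.mem_univ _, ⟨z, Finset.mem_univ _, h2, h3⟩,
        ⟨w, Finset.mem_univ _, Or.inl h1⟩⟩
  -- addable chords are forced, with a different color
  have hAdd : ∀ c : Fin 3, ∀ e ∈ Addable S (Af c),
      PDiag S e ∧ ι e ∈ G.edgeSet ∧ φ (ι e) ≠ c := by
    intro c e he
    simp only [Addable, Finset.mem_filter] at he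
    obtain ⟨hprod, hpd, hnotin, hnocross⟩ := he
    have hedge : ι e ∈ G.edgeSet := by
      by_contra hnedge
      obtain ⟨w, z, hwz, hed, hcol, hcr⟩ :=
        force_pair hgen hφ hsat hσ htrip (hpdlt e hpd) hnedge c
      have hmem : (w, z) ∈ Af c := by
        rw [hAmem]
        refine ⟨?_, hed, hcol⟩
        rcases hcr with ⟨h1, h2, h3⟩ | ⟨h1, h2, h3⟩
        · exact ⟨Finset.mem_univ _, Finset.mem_univ _, ⟨e.2, Finset.mem_univ _, h2, h3⟩,
            ⟨e.1, Finset.mem_univ _, Or.inl h1⟩⟩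
        · exact ⟨Finset.mem_univ _, Finset.mem_univ _, ⟨e.1, Finset.mem_univ _, h1, h2⟩,
            ⟨e.2, Finset.mem_univ _, Or.inr h3⟩⟩
      exact hnocross (w, z) hmem hcr
    refine ⟨hpd, hedge, ?_⟩
    intro heq
    exact hnotin ((hAmem c e).2 ⟨hpd, hedge, heq⟩)
  -- the union of color classes
  set U : Finset (Fin n × Fin n) := (Af 0 ∪ Af 1) ∪ Af 2 with hU
  have hdisj : ∀ c d : Fin 3, c ≠ d → Disjoint (Af c) (Af d) := by
    intro c d hcd
    rw [Finset.disjoint_left]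
    intro e hec hed
    exact hcd (((hAmem c e).1 hec).2.2.symm.trans ((hAmem d e).1 hed).2.2)
  have hUcard : U.card = (Af 0).card + (Af 1).card + (Af 2).card := by
    rw [hU, Finset.card_union_of_disjoint, Finset.card_union_of_disjoint]
    · exact hdisj 0 1 (by decide)
    · rw [Finset.disjoint_union_left]
      exact ⟨hdisj 0 2 (by decide), hdisj 1 2 (by decide)⟩
  have hAU : ∀ c : Fin 3, Af c ⊆ U := by
    intro c
    fin_cases c
    · exact (Finset.subset_union_left).trans Finset.subset_union_left
    · exact (Finset.subset_union_right).trans Finset.subset_union_left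
    · exact Finset.subset_union_right
  have hmemU : ∀ e ∈ U, ∃ c, e ∈ Af c := by
    intro e he
    rw [hU, Finset.mem_union, Finset.mem_union] at he
    rcases he with (he | he) | he
    exacts [⟨0, he⟩, ⟨1, he⟩, ⟨2, he⟩]
  -- per-color inequality
  have hkey : ∀ c : Fin 3, 2 * (n : ℤ) - 6 ≤ (U.card : ℤ) + ((Af c).card : ℤ) := by
    intro c
    have hsub : Addable S (Af c) ⊆ U \ Af c := by
      intro e he
      obtain ⟨hpd, hedge, hcolne⟩ := hAdd c e he
      rw [Finset.mem_sdiff]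
      constructor
      · exact hAU (φ (ι e)) ((hAmem (φ (ι e)) e).2 ⟨hpd, hedge, rfl⟩)
      · simp only [Addable, Finset.mem_filter] at he
        exact he.2.2.1
    have h1 : (Addable S (Af c)).card ≤ (U \ Af c).card := Finset.card_le_card hsub
    have h2 : (U \ Af c).card = U.card - (Af c).card := Finset.card_sdiff_of_subset (hAU c)
    have h3 : (Af c).card ≤ U.card := Finset.card_le_card (hAU c)
    have h4 := lemmaC (Af c) S (hAc c) (hNCc c)
    rw [hScard] at h4
    have h5 : ((Addable S (Af c)).card : ℤ) ≤ (U.card : ℤ) - ((Af c).card : ℤ) := by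
      omega
    linarith
  have hsum : 6 * (n : ℤ) - 18 ≤ 4 * (U.card : ℤ) := by
    have h0 := hkey 0
    have h1 := hkey 1
    have h2 := hkey 2
    have : ((Af 0).card : ℤ) + ((Af 1).card : ℤ) + ((Af 2).card : ℤ) = (U.card : ℤ) := by
      exact_mod_cast hUcard.symm
    linarith
  -- hull pairs
  set H : Finset (Fin n × Fin n) :=
    (S ×ˢ S).filter (fun e => e.1 < e.2 ∧ ¬ PDiag S e) with hH
  have hnpos : 0 < n := by omega
  set g : Fin n → Fin n × Fin n := fun i =>
    if h : (i.val + 1) < n then (i, ⟨i.val + 1, h⟩) else (⟨0, hnpos⟩, i) with hg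
  have hgmem : ∀ i : Fin n, g i ∈ H := by
    intro i
    rw [hH, Finset.mem_filter]
    refine ⟨Finset.mem_product.2 ⟨Finset.mem_univ _, Finset.mem_univ _⟩, ?_⟩
    by_cases h : (i.val + 1) < n
    · simp only [hg, dif_pos h]
      constructor
      · show (i : ℕ) < (i : ℕ) + 1
        omega
      · rintro ⟨-, -, ⟨s, -, h1, h2⟩, -⟩
        have g1 : (i : ℕ) < (s : ℕ) := h1
        have g2 : (s : ℕ) < (i : ℕ) + 1 := h2
        omega
    · simp only [hg, dif_neg h]
      push_neg at h
      have hival : i.val = n - 1 := by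
        have := i.isLt
        omega
      constructor
      · show (0 : ℕ) < (i : ℕ)
        omega
      · rintro ⟨-, -, -, ⟨s, -, hor⟩⟩
        have hsval := s.isLt
        rcases hor with h' | h'
        · have g1 : (s : ℕ) < 0 := h'
          omega
        · have g1 : (i : ℕ) < (s : ℕ) := h'
          omega
  have hginj : Set.InjOn g ↑(Finset.univ : Finset (Fin n)) := by
    intro i _ j _ hij
    by_cases h1 : (i.val + 1) < n <;> by_cases h2 : (j.val + 1) < n
    · simp only [hg, dif_pos h1, dif_pos h2] at hij
      exact congrArg Prod.fst hij
    · simp only [hg, dif_pos h1, dif_neg h2] at hij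
      have e1' : (i : ℕ) = 0 := congrArg Fin.val (congrArg Prod.fst hij)
      have e2' : (i : ℕ) + 1 = (j : ℕ) := congrArg Fin.val (congrArg Prod.snd hij)
      have := j.isLt
      omega
    · simp only [hg, dif_neg h1, dif_pos h2] at hij
      have e1' : (0 : ℕ) = (j : ℕ) := congrArg Fin.val (congrArg Prod.fst hij)
      have e2' : (i : ℕ) = (j : ℕ) + 1 := congrArg Fin.val (congrArg Prod.snd hij)
      have := i.isLt
      omega
    · simp only [hg, dif_neg h1, dif_neg h2] at hij
      exact congrArg Prod.snd hij
  have hHcard : n ≤ H.card := by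
    have := Finset.card_le_card_of_injOn g (fun i _ => hgmem i) hginj
    rwa [Finset.card_univ, Fintype.card_fin] at this
  have hHdisjU : Disjoint H U := by
    rw [Finset.disjoint_left]
    intro e heH heU
    obtain ⟨c, hc⟩ := hmemU e heU
    rw [hH, Finset.mem_filter] at heH
    exact heH.2.2 ((hAmem c e).1 hc).1
  set T : Finset (Fin n × Fin n) := H ∪ U with hT
  have hTcard : T.card = H.card + U.card := Finset.card_union_of_disjoint hHdisjU
  have hTlt : ∀ e ∈ T, e.1 < e.2 := by
    intro e he
    rw [hT, Finset.mem_union] at he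
    rcases he with he | he
    · exact ((Finset.mem_filter.1 he).2).1
    · obtain ⟨c, hc⟩ := hmemU e he
      exact hpdlt e ((hAmem c e).1 hc).1
  have hTedge : ∀ e ∈ T, ι e ∈ G.edgeSet := by
    intro e he
    rw [hT, Finset.mem_union] at he
    rcases he with he | he
    · have := (Finset.mem_filter.1 he).2
      exact hHull e this.1 this.2
    · obtain ⟨c, hc⟩ := hmemU e he
      exact ((hAmem c e).1 hc).2.1
  have hinjT : Set.InjOn ι ↑T := by
    intro e he f hf hef
    rcases Sym2.eq_iff.1 hef with ⟨h1, h2⟩ | ⟨h1, h2⟩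
    · exact Prod.ext (hσ.1 h1) (hσ.1 h2)
    · have g1 : e.1 = f.2 := hσ.1 h1
      have g2 : e.2 = f.1 := hσ.1 h2
      have l1 := hTlt e (by exact_mod_cast he)
      have l2 := hTlt f (by exact_mod_cast hf)
      rw [g1, g2] at l1
      exact absurd l2 (not_lt.2 (le_of_lt l1)).elim
  have himg : ↑(T.image ι) ⊆ G.edgeSet := by
    intro x hx
    rw [Finset.coe_image] at hx
    obtain ⟨e, he, rfl⟩ := hx
    exact hTedge e (by exact_mod_cast he)
  have hncard : (T.image ι).card ≤ G.edgeSet.ncard := by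
    have h1 := Set.ncard_le_ncard himg (Set.toFinite _)
    rwa [Set.ncard_coe_finset] at h1
  have himgcard : (T.image ι).card = T.card := Finset.card_image_of_injOn hinjT
  have hfinal : n + U.card ≤ G.edgeSet.ncard := by
    have hTle : T.card ≤ G.edgeSet.ncard := by rw [← himgcard]; exact hncard
    omega
  have hfinalZ : (n : ℤ) + (U.card : ℤ) ≤ (G.edgeSet.ncard : ℤ) := by exact_mod_cast hfinal
  linarith

end App3

end ThmAux

/-- An edge is an outer edge if its endpoints are consecutive on the boundary
of the convex hull of the vertex points, i.e. all other vertex points lie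
strictly on one side of the line through its endpoints. -/
def IsOuterEdge {V : Type} (p : V → Pt) (e : Sym2 V) : Prop :=
  ∃ u v : V, e = s(u, v) ∧
    ((∀ w : V, w ≠ u → w ≠ v → 0 < det2 (p u) (p v) (p w)) ∨
     (∀ w : V, w ≠ u → w ≠ v → det2 (p u) (p v) (p w) < 0))

/-- Every saturated precolored convex Θ^3-drawing of a graph on
`n ≥ 3` vertices has at least `5n/2 - 6` edges. -/
theorem stmt6 (n : ℕ) (hn : 3 ≤ n)
    (G : SimpleGraph (Fin n)) (p : Fin n → Pt) (φ : Sym2 (Fin n) → Fin 3)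
    (hgen : GenPos p) (hconv : ConvexPos p)
    (hφ : CrossingFree G p φ) (hsat : PrecoloredSaturated G p φ) :
    2 * (G.edgeSet.ncard : ℤ) ≥ 5 * (n : ℤ) - 12 := by
  have hnpos : 0 < n := by omega
  obtain ⟨σ, hσ, htrip⟩ := ThmAux.exists_order hnpos hgen hconv
  exact ThmAux.main_count hn hgen hφ hsat hσ htrip
end

section
/- Let Γ be a saturated precolored convex Θ^3-drawing of a graph G on n ≥ 4 vertices with coloring φ. Then for each color c ∈ {1,2,3}, the number of inner edges of color c is at least (n − 4)/2, i.e., 2·|{e ∈ E(G) : φ(e) = c and e is an inner edge}| ≥ n − 4. -/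
open scoped Classical

namespace Stmt7Aux

/-! ### Pure `det2` algebra -/

lemma det2_cycle (a b c : Pt) : det2 a b c = det2 b c a := by unfold det2; ring

lemma det2_swap12 (a b c : Pt) : det2 a b c = - det2 b a c := by unfold det2; ring

lemma det2_swap23 (a b c : Pt) : det2 a b c = - det2 a c b := by unfold det2; ring

lemma det2_self1 (a c : Pt) : det2 a a c = 0 := by simp [det2]

lemma det2_self2 (a b : Pt) : det2 a b a = 0 := by unfold det2; ring

lemma det2_self3 (a b : Pt) : det2 a b b = 0 := by unfold det2; ring

lemma det2_combo {s t : ℝ} (hst : s + t = 1) (P Q X Y : Pt) :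
    det2 P Q (s • X + t • Y) = s * det2 P Q X + t * det2 P Q Y := by
  have ht : t = 1 - s := by linarith
  subst ht
  simp [det2, Prod.fst_add, Prod.snd_add, Prod.smul_fst, Prod.smul_snd, smul_eq_mul]
  ring

lemma pt_ext {A B : Pt} (h1 : A.1 = B.1) (h2 : A.2 = B.2) : A = B := Prod.ext_iff.mpr ⟨h1, h2⟩

/-- If `C` is on the line through `A ≠ B`, it can be parametrized. -/
lemma line_param {A B C : Pt} (hAB : A ≠ B) (h : det2 A B C = 0) :
    ∃ s : ℝ, C = A + s • (B - A) := by
  have hd : (B.1 - A.1) * (C.2 - A.2) = (B.2 - A.2) * (C.1 - A.1) := by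
    simp [det2] at h; linarith
  by_cases h1 : B.1 - A.1 = 0
  · have h2 : B.2 - A.2 ≠ 0 := by
      intro h2
      exact hAB (pt_ext (by linarith) (by linarith)).symm
    have hC1 : C.1 = A.1 := by
      have := hd
      rw [h1] at this
      simp at this
      rcases this with h' | h'
      · exact absurd h' h2
      · linarith
    refine ⟨(C.2 - A.2) / (B.2 - A.2), pt_ext ?_ ?_⟩ <;>
      simp [Prod.fst_add, Prod.snd_add, Prod.smul_fst, Prod.smul_snd, smul_eq_mul,
        Prod.fst_sub, Prod.snd_sub]
    · rw [h1, hC1]; ring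
    · field_simp
      ring
  · refine ⟨(C.1 - A.1) / (B.1 - A.1), pt_ext ?_ ?_⟩ <;>
      simp [Prod.fst_add, Prod.snd_add, Prod.smul_fst, Prod.smul_snd, smul_eq_mul,
        Prod.fst_sub, Prod.snd_sub]
    · field_simp
      ring
    · field_simp
      nlinarith [hd]

end Stmt7Aux
namespace Stmt7Aux2
open Stmt7Aux

variable {n : ℕ} {p : Fin n → Pt}

/-- Abbreviation for the orientation determinant of three vertices. -/
def Dt (p : Fin n → Pt) (a b c : Fin n) : ℝ := det2 (p a) (p b) (p c)

lemma Dt_cycle (a b c : Fin n) : Dt p a b c = Dt p b c a := det2_cycle _ _ _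
lemma Dt_swap12 (a b c : Fin n) : Dt p a b c = - Dt p b a c := det2_swap12 _ _ _
lemma Dt_swap23 (a b c : Fin n) : Dt p a b c = - Dt p a c b := det2_swap23 _ _ _
lemma Dt_self1 (a c : Fin n) : Dt p a a c = 0 := det2_self1 _ _
lemma Dt_self2 (a b : Fin n) : Dt p a b a = 0 := det2_self2 _ _
lemma Dt_self3 (a b : Fin n) : Dt p a b b = 0 := det2_self3 _ _

lemma Dne (hgen : GenPos p) {a b c : Fin n} (hab : a ≠ b) (hac : a ≠ c) (hbc : b ≠ c) :
    Dt p a b c ≠ 0 := by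
  intro h0
  apply hgen.2 a b c hab hac hbc
  have hAB : p a ≠ p b := fun h => hab (hgen.1 h)
  obtain ⟨s, hs⟩ := line_param hAB h0
  rw [collinear_iff_of_mem (show p a ∈ ({p a, p b, p c} : Set Pt) by simp)]
  refine ⟨p b - p a, ?_⟩
  intro q hq
  simp only [Set.mem_insert_iff, Set.mem_singleton_iff] at hq
  rcases hq with rfl | rfl | rfl
  · exact ⟨0, by simp⟩
  · exact ⟨1, by rw [vadd_eq_add, one_smul, sub_add_cancel]⟩
  · refine ⟨s, ?_⟩
    rw [vadd_eq_add, hs]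
    refine pt_ext ?_ ?_ <;>
      simp [Prod.fst_sub, Prod.snd_sub, Prod.fst_add, Prod.snd_add,
        Prod.smul_fst, Prod.smul_snd, smul_eq_mul] <;> ring

/-- Distinct vertices sharing an endpoint never cross. -/
lemma no_cross_share (hgen : GenPos p) {u v w : Fin n} (huv : u ≠ v) (huw : u ≠ w)
    (hvw : v ≠ w) : ¬ SegCross (p u) (p v) (p u) (p w) := by
  rintro ⟨q, hq1, hq2⟩
  obtain ⟨s1, t1, hs1, ht1, hst1, hq1e⟩ := hq1
  obtain ⟨s2, t2, hs2, ht2, hst2, hq2e⟩ := hq2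
  apply Dne hgen huv huw hvw
  have hs1' : s1 = 1 - t1 := by linarith
  have hs2' : s2 = 1 - t2 := by linarith
  have h1 : q - p u = t1 • (p v - p u) := by
    rw [← hq1e, hs1']
    refine pt_ext ?_ ?_ <;>
      simp only [Prod.fst_sub, Prod.snd_sub, Prod.fst_add, Prod.snd_add,
        Prod.smul_fst, Prod.smul_snd, smul_eq_mul] <;> ring
  have h2 : q - p u = t2 • (p w - p u) := by
    rw [← hq2e, hs2']
    refine pt_ext ?_ ?_ <;>
      simp only [Prod.fst_sub, Prod.snd_sub, Prod.fst_add, Prod.snd_add,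
        Prod.smul_fst, Prod.smul_snd, smul_eq_mul] <;> ring
  have h3 : t1 • (p v - p u) = t2 • (p w - p u) := by rw [← h1, h2]
  have h4 : t1 * ((p v).1 - (p u).1) = t2 * ((p w).1 - (p u).1) := by
    have := congrArg Prod.fst h3
    simpa [Prod.smul_fst, Prod.fst_sub, smul_eq_mul] using this
  have h5 : t1 * ((p v).2 - (p u).2) = t2 * ((p w).2 - (p u).2) := by
    have := congrArg Prod.snd h3
    simpa [Prod.smul_snd, Prod.snd_sub, smul_eq_mul] using this
  show det2 (p u) (p v) (p w) = 0
  unfold det2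
  have ht2' : t2 ≠ 0 := ne_of_gt ht2
  have e1 : (p w).1 - (p u).1 = (t1 / t2) * ((p v).1 - (p u).1) := by field_simp; linarith
  have e2 : (p w).2 - (p u).2 = (t1 / t2) * ((p v).2 - (p u).2) := by field_simp; linarith
  rw [e1, e2]; ring

/-- Crossing implies strict separation. -/
lemma sep_of_cross (hgen : GenPos p) {u v x y : Fin n} (huv : u ≠ v) (hux : u ≠ x)
    (huy : u ≠ y) (hvx : v ≠ x) (hvy : v ≠ y) (hxy : x ≠ y)
    (h : SegCross (p u) (p v) (p x) (p y)) : Dt p u v x * Dt p u v y < 0 := by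
  obtain ⟨q, hq1, hq2⟩ := h
  obtain ⟨s1, t1, hs1, ht1, hst1, hq1e⟩ := hq1
  obtain ⟨s2, t2, hs2, ht2, hst2, hq2e⟩ := hq2
  have hz : det2 (p u) (p v) q = 0 := by
    rw [← hq1e, det2_combo hst1, det2_self2, det2_self3]; ring
  have hc : det2 (p u) (p v) q = s2 * Dt p u v x + t2 * Dt p u v y := by
    rw [← hq2e, det2_combo hst2]; rfl
  have hX := Dne hgen huv hux hvx
  have hY := Dne hgen huv huy hvy
  rcases lt_trichotomy (Dt p u v x) 0 with hx0 | hx0 | hx0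
  · rcases lt_trichotomy (Dt p u v y) 0 with hy0 | hy0 | hy0
    · nlinarith
    · exact absurd hy0 hY
    · nlinarith
  · exact absurd hx0 hX
  · rcases lt_trichotomy (Dt p u v y) 0 with hy0 | hy0 | hy0
    · nlinarith
    · exact absurd hy0 hY
    · nlinarith

lemma segcross_comm {A B C D : Pt} (h : SegCross A B C D) : SegCross C D A B := by
  obtain ⟨q, h1, h2⟩ := h; exact ⟨q, h2, h1⟩

lemma segcross_swap1 {A B C D : Pt} (h : SegCross A B C D) : SegCross B A C D := by
  obtain ⟨q, h1, h2⟩ := h; exact ⟨q, (openSegment_symm ℝ A B) ▸ h1, h2⟩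

lemma segcross_swap2 {A B C D : Pt} (h : SegCross A B C D) : SegCross A B D C := by
  obtain ⟨q, h1, h2⟩ := h; exact ⟨q, h1, (openSegment_symm ℝ C D) ▸ h2⟩

end Stmt7Aux2
namespace Stmt7Aux3
open Stmt7Aux Stmt7Aux2

variable {n : ℕ} {p : Fin n → Pt}

lemma seg_mem_hull (a b : Fin n) {q : Pt} (hq : q ∈ segment ℝ (p a) (p b)) :
    q ∈ convexHull ℝ (Set.range p) :=
  (convex_convexHull ℝ _).segment_subset (subset_convexHull ℝ _ (Set.mem_range_self a))
    (subset_convexHull ℝ _ (Set.mem_range_self b)) hq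

lemma pv_mem_hull (v : Fin n) : p v ∈ convexHull ℝ (Set.range p) :=
  subset_convexHull ℝ _ (Set.mem_range_self v)

/-- Key convexity fact: if `a`, `b` are strictly on opposite sides of line `uv`,
then `u`, `v` are strictly on opposite sides of line `ab`. -/
lemma sep_sep (hgen : GenPos p) (hconv : ConvexPos p) {u v a b : Fin n}
    (huv : u ≠ v) (hua : u ≠ a) (hub : u ≠ b) (hva : v ≠ a) (hvb : v ≠ b) (hab : a ≠ b)
    (ha : 0 < Dt p u v a) (hb : Dt p u v b < 0) : Dt p a b u * Dt p a b v < 0 := by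
  by_contra hcon
  push_neg at hcon
  set X := Dt p a b u with hXdef
  set Y := Dt p a b v with hYdef
  have hXne : X ≠ 0 := Dne hgen hab (Ne.symm hua) (Ne.symm hub)
  have hYne : Y ≠ 0 := Dne hgen hab (Ne.symm hva) (Ne.symm hvb)
  have hXY : 0 < X * Y := lt_of_le_of_ne hcon (fun h => by
    rcases mul_eq_zero.mp h.symm with h' | h' <;> [exact hXne h'; exact hYne h'])
  set Da := Dt p u v a with hDa
  set Db := Dt p u v b with hDb
  have hden : 0 < Da - Db := by linarith
  set t := Da / (Da - Db) with htdef
  have ht0 : 0 < t := div_pos ha hden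
  have ht1 : t < 1 := by rw [htdef, div_lt_one hden]; linarith
  set q : Pt := (1 - t) • p a + t • p b with hqdef
  have hqseg : q ∈ segment ℝ (p a) (p b) := ⟨1 - t, t, by linarith, le_of_lt ht0, by ring, rfl⟩
  have hqhull : q ∈ convexHull ℝ (Set.range p) := seg_mem_hull a b hqseg
  have hq0 : det2 (p u) (p v) q = 0 := by
    rw [hqdef, det2_combo (by ring : (1 - t) + t = 1)]
    show (1 - t) * Da + t * Db = 0
    rw [htdef]; field_simp; ring
  have hpuv : p u ≠ p v := fun h => huv (hgen.1 h)
  obtain ⟨s, hqs⟩ := line_param hpuv hq0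
  have hq2 : q = (1 - s) • p u + s • p v := by
    rw [hqs]
    refine pt_ext ?_ ?_ <;>
      simp only [Prod.fst_sub, Prod.snd_sub, Prod.fst_add, Prod.snd_add,
        Prod.smul_fst, Prod.smul_snd, smul_eq_mul] <;> ring
  have hzero : (1 - s) * X + s * Y = 0 := by
    have w1 : det2 (p a) (p b) q = 0 := by
      rw [hqdef, det2_combo (by ring : (1 - t) + t = 1), det2_self2, det2_self3]; ring
    have w2 : det2 (p a) (p b) q = (1 - s) * X + s * Y := by
      rw [hq2, det2_combo (by ring : (1 - s) + s = 1)]; rfl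
    linarith [w1, w2]
  have hs_out : s < 0 ∨ 1 < s := by
    by_contra hcon2
    push_neg at hcon2
    obtain ⟨hs0, hs1⟩ := hcon2
    rcases (mul_pos_iff.mp hXY) with ⟨hX, hY⟩ | ⟨hX, hY⟩
    · rcases eq_or_lt_of_le hs0 with rfl | hs0'
      · simp at hzero; exact hXne (by linarith)
      · nlinarith
    · rcases eq_or_lt_of_le hs0 with rfl | hs0'
      · simp at hzero; exact hXne (by linarith)
      · nlinarith
  rcases hs_out with hs | hs
  · -- p u strictly between q and p v
    have h1s : (0:ℝ) < 1 - s := by linarith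
    have h1s' : (1:ℝ) - s ≠ 0 := ne_of_gt h1s
    have hmem : p u ∈ openSegment ℝ q (p v) := by
      refine ⟨1 / (1 - s), -s / (1 - s), div_pos one_pos h1s,
        div_pos (by linarith) h1s, ?_, ?_⟩
      · field_simp
        ring
      · rw [hqs]
        refine pt_ext ?_ ?_ <;>
          simp only [Prod.fst_sub, Prod.snd_sub, Prod.fst_add, Prod.snd_add,
            Prod.smul_fst, Prod.smul_snd, smul_eq_mul] <;>
          · field_simp
            ring
    obtain ⟨h1, h2⟩ := (mem_extremePoints.mp (hconv u)).2 q hqhull (p v) (pv_mem_hull v) hmem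
    exact huv (hgen.1 h2.symm)
  · -- p v strictly between p u and q
    have hs0 : (0:ℝ) < s := by linarith
    have hs0' : s ≠ 0 := ne_of_gt hs0
    have hmem : p v ∈ openSegment ℝ (p u) q := by
      refine ⟨1 - 1 / s, 1 / s, by
        rw [sub_pos, div_lt_one hs0]; linarith,
        div_pos one_pos hs0, by ring, ?_⟩
      rw [hqs]
      refine pt_ext ?_ ?_ <;>
        simp only [Prod.fst_sub, Prod.snd_sub, Prod.fst_add, Prod.snd_add,
          Prod.smul_fst, Prod.smul_snd, smul_eq_mul] <;>
        · field_simp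
          ring
    obtain ⟨h1, h2⟩ := (mem_extremePoints.mp (hconv v)).2 (p u) (pv_mem_hull u) q hqhull hmem
    exact huv (hgen.1 h1)

end Stmt7Aux3
namespace Stmt7Aux4
open Stmt7Aux Stmt7Aux2 Stmt7Aux3

variable {n : ℕ} {p : Fin n → Pt}

/-- Distinctness of all four vertices from the two sign conditions. -/
lemma distinct_of_signs {u v a b : Fin n} (hgen : GenPos p)
    (ha : 0 < Dt p u v a) (hb : Dt p u v b < 0) :
    u ≠ v ∧ u ≠ a ∧ u ≠ b ∧ v ≠ a ∧ v ≠ b ∧ a ≠ b := by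
  refine ⟨?_, ?_, ?_, ?_, ?_, ?_⟩
  · rintro rfl; rw [Dt_self1] at ha; exact lt_irrefl _ ha
  · rintro rfl; rw [Dt_self2] at ha; exact lt_irrefl _ ha
  · rintro rfl; rw [Dt_self2] at hb; exact lt_irrefl _ hb
  · rintro rfl; rw [Dt_self3] at ha; exact lt_irrefl _ ha
  · rintro rfl; rw [Dt_self3] at hb; exact lt_irrefl _ hb
  · rintro rfl; linarith

/-- If `a`, `b` are strictly on opposite sides of line `uv`, the segments
`ab` and `uv` cross. -/
lemma cross_of_sep (hgen : GenPos p) (hconv : ConvexPos p) {u v a b : Fin n}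
    (ha : 0 < Dt p u v a) (hb : Dt p u v b < 0) :
    SegCross (p a) (p b) (p u) (p v) := by
  obtain ⟨huv, hua, hub, hva, hvb, hab⟩ := distinct_of_signs hgen ha hb
  have hsep := sep_sep hgen hconv huv hua hub hva hvb hab ha hb
  set X := Dt p a b u with hX
  set Y := Dt p a b v with hY
  set Da := Dt p u v a with hDa
  set Db := Dt p u v b with hDb
  have hden : 0 < Da - Db := by linarith
  set t := Da / (Da - Db) with htdef
  have ht0 : 0 < t := div_pos ha hden
  have ht1 : t < 1 := by rw [htdef, div_lt_one hden]; linarith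
  set q : Pt := (1 - t) • p a + t • p b with hqdef
  have hq1 : q ∈ openSegment ℝ (p a) (p b) := ⟨1 - t, t, by linarith, ht0, by ring, rfl⟩
  have hq0 : det2 (p u) (p v) q = 0 := by
    rw [hqdef, det2_combo (by ring : (1 - t) + t = 1)]
    show (1 - t) * Da + t * Db = 0
    rw [htdef]; field_simp; ring
  have hpuv : p u ≠ p v := fun h => huv (hgen.1 h)
  obtain ⟨s, hqs⟩ := line_param hpuv hq0
  have hq2 : q = (1 - s) • p u + s • p v := by
    rw [hqs]
    refine pt_ext ?_ ?_ <;>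
      simp only [Prod.fst_sub, Prod.snd_sub, Prod.fst_add, Prod.snd_add,
        Prod.smul_fst, Prod.smul_snd, smul_eq_mul] <;> ring
  have hzero : (1 - s) * X + s * Y = 0 := by
    have w1 : det2 (p a) (p b) q = 0 := by
      rw [hqdef, det2_combo (by ring : (1 - t) + t = 1), det2_self2, det2_self3]; ring
    have w2 : det2 (p a) (p b) q = (1 - s) * X + s * Y := by
      rw [hq2, det2_combo (by ring : (1 - s) + s = 1)]; rfl
    linarith [w1, w2]
  have hs01 : 0 < s ∧ s < 1 := by
    rcases mul_neg_iff.mp hsep with ⟨hXp, hYn⟩ | ⟨hXn, hYp⟩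
    · constructor
      · by_contra hc; push_neg at hc; nlinarith
      · by_contra hc; push_neg at hc; nlinarith
    · constructor
      · by_contra hc; push_neg at hc; nlinarith
      · by_contra hc; push_neg at hc; nlinarith
  exact ⟨q, hq1, ⟨1 - s, s, by linarith [hs01.2], hs01.1, by ring, hq2.symm⟩⟩

/-- Separate distinctness helper from a single positive determinant. -/
lemma distinct_of_pos {a b c : Fin n} (h : 0 < Dt p a b c) : a ≠ b ∧ a ≠ c ∧ b ≠ c := by
  refine ⟨?_, ?_, ?_⟩
  · rintro rfl; rw [Dt_self1] at h; exact lt_irrefl _ h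
  · rintro rfl; rw [Dt_self2] at h; exact lt_irrefl _ h
  · rintro rfl; rw [Dt_self3] at h; exact lt_irrefl _ h

/-- If all triples through `a` are positively oriented, so is `(u,v,w)`. -/
lemma tripleplus (hgen : GenPos p) (hconv : ConvexPos p) {a u v w : Fin n}
    (h1 : 0 < Dt p a u v) (h2 : 0 < Dt p a v w) (h3 : 0 < Dt p a u w) :
    0 < Dt p u v w := by
  obtain ⟨hau, hav, huv⟩ := distinct_of_pos h1
  obtain ⟨_, haw, hvw⟩ := distinct_of_pos h2
  obtain ⟨_, _, huw⟩ := distinct_of_pos h3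
  rcases lt_trichotomy (Dt p u v w) 0 with hneg | hzero | hpos
  · exfalso
    have hDa : 0 < Dt p u v a := by rw [← Dt_cycle]; exact h1
    have hsep := sep_sep hgen hconv huv (Ne.symm hau) huw (Ne.symm hav) hvw haw hDa hneg
    have e1 : Dt p a w u = - Dt p a u w := by rw [Dt_swap23]
    have e2 : Dt p a w v = - Dt p a v w := by rw [Dt_swap23]
    rw [e1, e2] at hsep
    nlinarith
  · exact absurd hzero (Dne hgen huv huw hvw)
  · exact hpos

end Stmt7Aux4
namespace Stmt7Aux5
open Stmt7Aux Stmt7Aux2 Stmt7Aux3 Stmt7Aux4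

variable {n : ℕ} {p : Fin n → Pt}

lemma seg_cases {x A B : Pt} (h : x ∈ segment ℝ A B) :
    x = A ∨ x = B ∨ x ∈ openSegment ℝ A B := by
  obtain ⟨s, t, hs, ht, hst, heq⟩ := h
  rcases eq_or_lt_of_le hs with rfl | hs'
  · have ht1 : t = 1 := by linarith
    subst ht1
    right; left
    rw [← heq]; simp
  · rcases eq_or_lt_of_le ht with rfl | ht'
    · have hs1 : s = 1 := by linarith
      subst hs1
      left
      rw [← heq]; simp
    · exact Or.inr (Or.inr ⟨s, t, hs', ht', hst, heq⟩)

/-- An extreme vertex is not in the convex hull of four other vertex points. -/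
lemma not_mem_hull4 (hgen : GenPos p) (hconv : ConvexPos p) {a b c d e : Fin n}
    (hab : a ≠ b) (hac : a ≠ c) (had : a ≠ d) (hae : a ≠ e) :
    p a ∉ convexHull ℝ ({p b, p c, p d, p e} : Set Pt) := by
  have hinj := hgen.1
  have hext := (mem_extremePoints.mp (hconv a)).2
  have hpab : p a ≠ p b := fun h => hab (hinj h)
  have hpac : p a ≠ p c := fun h => hac (hinj h)
  have hpad : p a ≠ p d := fun h => had (hinj h)
  have hpae : p a ≠ p e := fun h => hae (hinj h)
  have step : ∀ (x0 : Pt) (s : Set Pt), s.Nonempty → x0 ∈ Set.range p →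
      (convexHull ℝ s ⊆ convexHull ℝ (Set.range p)) → p a ≠ x0 →
      p a ∈ convexHull ℝ (insert x0 s) → p a ∈ convexHull ℝ s := by
    intro x0 s hsne hx0 hs hne hmem
    rw [convexHull_insert hsne, mem_convexJoin] at hmem
    obtain ⟨x1, hx1, z, hz, hseg⟩ := hmem
    rw [Set.mem_singleton_iff] at hx1
    rw [hx1] at hseg
    rcases seg_cases hseg with h | h | h
    · exact absurd h hne
    · exact h ▸ hz
    · exfalso
      obtain ⟨h1, _⟩ := hext x0 (subset_convexHull ℝ _ hx0) z (hs hz) h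
      exact hne h1.symm
  intro hmem
  have hsub3 : convexHull ℝ ({p c, p d, p e} : Set Pt) ⊆ convexHull ℝ (Set.range p) := by
    apply convexHull_mono; intro z hz
    rcases hz with rfl | rfl | rfl
    exacts [⟨c, rfl⟩, ⟨d, rfl⟩, ⟨e, rfl⟩]
  have hsub2 : convexHull ℝ ({p d, p e} : Set Pt) ⊆ convexHull ℝ (Set.range p) := by
    apply convexHull_mono; intro z hz
    rcases hz with rfl | rfl
    exacts [⟨d, rfl⟩, ⟨e, rfl⟩]
  have hsub1 : convexHull ℝ ({p e} : Set Pt) ⊆ convexHull ℝ (Set.range p) := by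
    apply convexHull_mono; rintro z rfl
    exact ⟨e, rfl⟩
  have m3 : p a ∈ convexHull ℝ ({p c, p d, p e} : Set Pt) :=
    step (p b) _ ⟨p c, by simp⟩ (Set.mem_range_self b) hsub3 hpab hmem
  have m2 : p a ∈ convexHull ℝ ({p d, p e} : Set Pt) :=
    step (p c) _ ⟨p d, by simp⟩ (Set.mem_range_self c) hsub2 hpac m3
  have m1 : p a ∈ convexHull ℝ ({p e} : Set Pt) :=
    step (p d) _ ⟨p e, by simp⟩ (Set.mem_range_self d) hsub1 hpad m2
  rw [convexHull_singleton] at m1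
  exact hpae m1

/-- Sorting four elements of a transitive, total relation. -/
lemma sort4 {α : Type} (r : α → α → Prop)
    (tr : ∀ x y z : α, r x y → r y z → r x z)
    (tot : ∀ a b : α, a ≠ b → r a b ∨ r b a)
    {x y z w : α} (hxy : x ≠ y) (hxz : x ≠ z) (hxw : x ≠ w) (hyz : y ≠ z)
    (hyw : y ≠ w) (hzw : z ≠ w) :
    ∃ a b c d : α, (a = x ∨ a = y ∨ a = z ∨ a = w) ∧ (b = x ∨ b = y ∨ b = z ∨ b = w) ∧
      (c = x ∨ c = y ∨ c = z ∨ c = w) ∧ (d = x ∨ d = y ∨ d = z ∨ d = w) ∧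
      r a b ∧ r a c ∧ r a d ∧ r b c ∧ r b d ∧ r c d := by
  obtain ⟨x1, y1, d1, rxy1⟩ : ∃ u v, ((u = x ∧ v = y) ∨ (u = y ∧ v = x)) ∧ r u v := by
    rcases tot x y hxy with h | h
    exacts [⟨x, y, Or.inl ⟨rfl, rfl⟩, h⟩, ⟨y, x, Or.inr ⟨rfl, rfl⟩, h⟩]
  obtain ⟨z1, w1, d2, rzw1⟩ : ∃ u v, ((u = z ∧ v = w) ∨ (u = w ∧ v = z)) ∧ r u v := by
    rcases tot z w hzw with h | h
    exacts [⟨z, w, Or.inl ⟨rfl, rfl⟩, h⟩, ⟨w, z, Or.inr ⟨rfl, rfl⟩, h⟩]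
  have hx1z1 : x1 ≠ z1 := by
    rcases d1 with ⟨h1, _⟩ | ⟨h1, _⟩ <;> rcases d2 with ⟨h3, _⟩ | ⟨h3, _⟩ <;>
      rw [h1, h3] <;> assumption
  have hy1z1 : y1 ≠ z1 := by
    rcases d1 with ⟨_, h1⟩ | ⟨_, h1⟩ <;> rcases d2 with ⟨h3, _⟩ | ⟨h3, _⟩ <;>
      rw [h1, h3] <;> first | assumption | (intro hc; exact (by assumption : _ ≠ _) hc.symm)
  have hx1w1 : x1 ≠ w1 := by
    rcases d1 with ⟨h1, _⟩ | ⟨h1, _⟩ <;> rcases d2 with ⟨_, h3⟩ | ⟨_, h3⟩ <;>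
      rw [h1, h3] <;> assumption
  have hy1w1 : y1 ≠ w1 := by
    rcases d1 with ⟨_, h1⟩ | ⟨_, h1⟩ <;> rcases d2 with ⟨_, h3⟩ | ⟨_, h3⟩ <;>
      rw [h1, h3] <;> assumption
  have mx1 : x1 = x ∨ x1 = y ∨ x1 = z ∨ x1 = w := by
    rcases d1 with ⟨h1, _⟩ | ⟨h1, _⟩
    exacts [Or.inl h1, Or.inr (Or.inl h1)]
  have my1 : y1 = x ∨ y1 = y ∨ y1 = z ∨ y1 = w := by
    rcases d1 with ⟨_, h1⟩ | ⟨_, h1⟩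
    exacts [Or.inr (Or.inl h1), Or.inl h1]
  have mz1 : z1 = x ∨ z1 = y ∨ z1 = z ∨ z1 = w := by
    rcases d2 with ⟨h1, _⟩ | ⟨h1, _⟩
    exacts [Or.inr (Or.inr (Or.inl h1)), Or.inr (Or.inr (Or.inr h1))]
  have mw1 : w1 = x ∨ w1 = y ∨ w1 = z ∨ w1 = w := by
    rcases d2 with ⟨_, h1⟩ | ⟨_, h1⟩
    exacts [Or.inr (Or.inr (Or.inr h1)), Or.inr (Or.inr (Or.inl h1))]
  rcases tot x1 z1 hx1z1 with h13 | h31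
  · rcases tot y1 z1 hy1z1 with h23 | h32
    · exact ⟨x1, y1, z1, w1, mx1, my1, mz1, mw1, rxy1, h13,
        tr _ _ _ h13 rzw1, h23, tr _ _ _ h23 rzw1, rzw1⟩
    · rcases tot y1 w1 hy1w1 with h24 | h42
      · exact ⟨x1, z1, y1, w1, mx1, mz1, my1, mw1, h13, rxy1,
          tr _ _ _ rxy1 h24, h32, rzw1, h24⟩
      · exact ⟨x1, z1, w1, y1, mx1, mz1, mw1, my1, h13,
          tr _ _ _ h13 rzw1, rxy1, rzw1, h32, h42⟩
  · rcases tot x1 w1 hx1w1 with h14 | h41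
    · rcases tot y1 w1 hy1w1 with h24 | h42
      · exact ⟨z1, x1, y1, w1, mz1, mx1, my1, mw1, h31,
          tr _ _ _ h31 rxy1, rzw1, rxy1, h14, h24⟩
      · exact ⟨z1, x1, w1, y1, mz1, mx1, mw1, my1, h31, rzw1,
          tr _ _ _ h31 rxy1, h14, rxy1, h42⟩
    · exact ⟨z1, w1, x1, y1, mz1, mw1, mx1, my1, rzw1, h31,
        tr _ _ _ h31 rxy1, h41, tr _ _ _ h41 rxy1, rxy1⟩

lemma halfplane_id (A U V W : Pt) (α β : ℝ) :
    det2 A U W * ((A.1 - V.1) * α + (A.2 - V.2) * β) =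
      det2 A U V * ((A.1 - W.1) * α + (A.2 - W.2) * β) +
        det2 A V W * ((A.1 - U.1) * α + (A.2 - U.2) * β) := by
  unfold det2; ring

/-- Five points in convex position can be labelled so that all triples are
positively oriented. -/
lemma order5 (hgen : GenPos p) (hconv : ConvexPos p) {t1 t2 t3 t4 t5 : Fin n}
    (h12 : t1 ≠ t2) (h13 : t1 ≠ t3) (h14 : t1 ≠ t4) (h15 : t1 ≠ t5)
    (h23 : t2 ≠ t3) (h24 : t2 ≠ t4) (h25 : t2 ≠ t5) (h34 : t3 ≠ t4)
    (h35 : t3 ≠ t5) (h45 : t4 ≠ t5) :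
    ∃ q1 q2 q3 q4 q5 : Fin n,
      (q1 = t1 ∨ q1 = t2 ∨ q1 = t3 ∨ q1 = t4 ∨ q1 = t5) ∧
      (q2 = t1 ∨ q2 = t2 ∨ q2 = t3 ∨ q2 = t4 ∨ q2 = t5) ∧
      (q3 = t1 ∨ q3 = t2 ∨ q3 = t3 ∨ q3 = t4 ∨ q3 = t5) ∧
      (q4 = t1 ∨ q4 = t2 ∨ q4 = t3 ∨ q4 = t4 ∨ q4 = t5) ∧
      (q5 = t1 ∨ q5 = t2 ∨ q5 = t3 ∨ q5 = t4 ∨ q5 = t5) ∧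
      0 < Dt p q1 q2 q3 ∧ 0 < Dt p q1 q2 q4 ∧ 0 < Dt p q1 q2 q5 ∧
      0 < Dt p q1 q3 q4 ∧ 0 < Dt p q1 q3 q5 ∧ 0 < Dt p q1 q4 q5 ∧
      0 < Dt p q2 q3 q4 ∧ 0 < Dt p q2 q3 q5 ∧ 0 < Dt p q2 q4 q5 ∧
      0 < Dt p q3 q4 q5 := by
  have hnot := not_mem_hull4 hgen hconv h12 h13 h14 h15
  have hcl : IsClosed (convexHull ℝ ({p t2, p t3, p t4, p t5} : Set Pt)) :=
    ((Set.toFinite _).isCompact_convexHull ℝ).isClosed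
  obtain ⟨f, u0, hlt, hgt⟩ :=
    geometric_hahn_banach_closed_point (convex_convexHull ℝ _) hcl hnot
  have hf : ∀ z : Pt, f z = z.1 * f (1, 0) + z.2 * f (0, 1) := by
    intro z
    have hz : z = z.1 • ((1:ℝ), (0:ℝ)) + z.2 • ((0:ℝ), (1:ℝ)) := by
      refine pt_ext ?_ ?_ <;>
        simp [Prod.fst_add, Prod.snd_add, Prod.smul_fst, Prod.smul_snd, smul_eq_mul]
    conv_lhs => rw [hz]
    rw [map_add, map_smul, map_smul]
    simp [smul_eq_mul]
  set α : ℝ := f (1, 0) with hα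
  set β : ℝ := f (0, 1) with hβ
  have hne_t1 : ∀ z : Fin n, (z = t2 ∨ z = t3 ∨ z = t4 ∨ z = t5) → z ≠ t1 := by
    rintro z (rfl | rfl | rfl | rfl)
    exacts [Ne.symm h12, Ne.symm h13, Ne.symm h14, Ne.symm h15]
  have hLpos : ∀ z : Fin n, (z = t2 ∨ z = t3 ∨ z = t4 ∨ z = t5) →
      0 < ((p t1).1 - (p z).1) * α + ((p t1).2 - (p z).2) * β := by
    intro z hz
    have hmem : p z ∈ convexHull ℝ ({p t2, p t3, p t4, p t5} : Set Pt) := by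
      apply subset_convexHull
      rcases hz with rfl | rfl | rfl | rfl
      · exact Set.mem_insert _ _
      · exact Set.mem_insert_of_mem _ (Set.mem_insert _ _)
      · exact Set.mem_insert_of_mem _ (Set.mem_insert_of_mem _ (Set.mem_insert _ _))
      · exact Set.mem_insert_of_mem _ (Set.mem_insert_of_mem _ (Set.mem_insert_of_mem _ rfl))
    have h1 : f (p z) < u0 := hlt _ hmem
    have heq : ((p t1).1 - (p z).1) * α + ((p t1).2 - (p z).2) * β
        = f (p t1) - f (p z) := by
      rw [hf (p t1), hf (p z), hα, hβ]; ring
    rw [heq]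
    linarith
  have tr : ∀ x y z : {u : Fin n // u = t2 ∨ u = t3 ∨ u = t4 ∨ u = t5},
      0 < Dt p t1 x.1 y.1 → 0 < Dt p t1 y.1 z.1 → 0 < Dt p t1 x.1 z.1 := by
    intro x y z hxy hyz
    have hid := halfplane_id (p t1) (p x.1) (p y.1) (p z.1) α β
    have h1 := hLpos x.1 x.2
    have h2 := hLpos y.1 y.2
    have h3 := hLpos z.1 z.2
    have hxy' : 0 < det2 (p t1) (p x.1) (p y.1) := hxy
    have hyz' : 0 < det2 (p t1) (p y.1) (p z.1) := hyz
    show (0:ℝ) < det2 (p t1) (p x.1) (p z.1)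
    nlinarith [mul_pos hxy' h3, mul_pos hyz' h1]
  have tot : ∀ a b : {u : Fin n // u = t2 ∨ u = t3 ∨ u = t4 ∨ u = t5},
      a ≠ b → 0 < Dt p t1 a.1 b.1 ∨ 0 < Dt p t1 b.1 a.1 := by
    intro a b hab
    have hval : a.1 ≠ b.1 := fun h => hab (Subtype.ext h)
    have hne := Dne hgen (Ne.symm (hne_t1 a.1 a.2)) (Ne.symm (hne_t1 b.1 b.2)) hval
    rcases lt_or_gt_of_ne hne with h | h
    · right
      have : Dt p t1 b.1 a.1 = - Dt p t1 a.1 b.1 := by rw [Dt_swap23]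
      rw [this]
      linarith
    · exact Or.inl h
  obtain ⟨a, b, c, d, _, _, _, _, rab, rac, rad, rbc, rbd, rcd⟩ :=
    sort4 (fun u v : {u : Fin n // u = t2 ∨ u = t3 ∨ u = t4 ∨ u = t5} =>
        0 < Dt p t1 u.1 v.1) tr tot
      (x := ⟨t2, Or.inl rfl⟩) (y := ⟨t3, Or.inr (Or.inl rfl)⟩)
      (z := ⟨t4, Or.inr (Or.inr (Or.inl rfl))⟩) (w := ⟨t5, Or.inr (Or.inr (Or.inr rfl))⟩)
      (fun h => h23 (congrArg Subtype.val h)) (fun h => h24 (congrArg Subtype.val h))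
      (fun h => h25 (congrArg Subtype.val h)) (fun h => h34 (congrArg Subtype.val h))
      (fun h => h35 (congrArg Subtype.val h)) (fun h => h45 (congrArg Subtype.val h))
  have mem5 : ∀ u : {u : Fin n // u = t2 ∨ u = t3 ∨ u = t4 ∨ u = t5},
      u.1 = t1 ∨ u.1 = t2 ∨ u.1 = t3 ∨ u.1 = t4 ∨ u.1 = t5 := fun u => Or.inr u.2
  refine ⟨t1, a.1, b.1, c.1, d.1, Or.inl rfl, mem5 a, mem5 b, mem5 c, mem5 d,
    rab, rac, rad, rbc, rbd, rcd, ?_, ?_, ?_, ?_⟩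
  · exact tripleplus hgen hconv rab rbc rac
  · exact tripleplus hgen hconv rab rbd rad
  · exact tripleplus hgen hconv rac rcd rad
  · exact tripleplus hgen hconv rbc rcd rbd

end Stmt7Aux5
namespace Stmt7Aux6
open Stmt7Aux Stmt7Aux2 Stmt7Aux3 Stmt7Aux4 Stmt7Aux5

variable {n : ℕ} {G : SimpleGraph (Fin n)} {p : Fin n → Pt} {φ : Sym2 (Fin n) → Fin 3}

lemma edgecross_comm {e f : Sym2 (Fin n)} (h : EdgeCross p e f) : EdgeCross p f e := by
  obtain ⟨u, v, x, y, h1, h2, hseg⟩ := h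
  exact ⟨x, y, u, v, h2, h1, segcross_comm hseg⟩

/-- Two same-colored crossing-separated edges have different colors. -/
lemma color_ne (hgen : GenPos p) (hconv : ConvexPos p) (hφ : CrossingFree G p φ)
    {u v a b : Fin n} (h1 : 0 < Dt p u v a) (h2 : Dt p u v b < 0)
    (he1 : s(u, v) ∈ G.edgeSet) (he2 : s(a, b) ∈ G.edgeSet) :
    φ s(u, v) ≠ φ s(a, b) := by
  obtain ⟨huv, hua, hub, hva, hvb, hab⟩ := distinct_of_signs hgen h1 h2
  have cross := cross_of_sep hgen hconv h1 h2
  have hneq : s(a, b) ≠ s(u, v) := by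
    intro h
    rcases Sym2.eq_iff.mp h with ⟨h', _⟩ | ⟨h', _⟩
    · exact hua h'.symm
    · exact hva h'.symm
  intro heq
  exact hφ s(a, b) he2 s(u, v) he1 hneq heq.symm ⟨a, b, u, v, rfl, rfl, cross⟩

/-- The saturation property, localized to the full vertex set. -/
def HAp (G : SimpleGraph (Fin n)) (p : Fin n → Pt) (φ : Sym2 (Fin n) → Fin 3)
    (c : Fin 3) (W : Finset (Fin n)) : Prop :=
  ∀ u v : Fin n, u ∈ W → v ∈ W → u ≠ v → s(u, v) ∉ G.edgeSet →
    ∃ a b : Fin n, a ∈ W ∧ b ∈ W ∧ s(a, b) ∈ G.edgeSet ∧ φ s(a, b) = c ∧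
      0 < Dt p u v a ∧ Dt p u v b < 0 ∧ Dt p a b u * Dt p a b v < 0

lemma HA_univ (hgen : GenPos p) (hφ : CrossingFree G p φ)
    (hsat : PrecoloredSaturated G p φ) (c : Fin 3) : HAp G p φ c Finset.univ := by
  intro u v _ _ huv hne
  have hadj : ¬ G.Adj u v := fun h => hne (G.mem_edgeSet.mpr h)
  have hsat' := hsat u v huv hadj c
  unfold CrossingFree at hsat'
  push_neg at hsat'
  obtain ⟨e, he, f, hf, hef, heq, hcross⟩ := hsat'
  rw [SimpleGraph.edgeSet_sup, SimpleGraph.edgeSet_fromEdgeSet] at he hf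
  have core : ∀ f' : Sym2 (Fin n), f' ∈ G.edgeSet → f' ≠ s(u, v) → φ f' = c →
      EdgeCross p s(u, v) f' →
      ∃ a b : Fin n, a ∈ Finset.univ ∧ b ∈ Finset.univ ∧ s(a, b) ∈ G.edgeSet ∧
        φ s(a, b) = c ∧ 0 < Dt p u v a ∧ Dt p u v b < 0 ∧
        Dt p a b u * Dt p a b v < 0 := by
    intro f' hfG hfne hfc hcr
    obtain ⟨u', v', x, y, h1, h2, hseg⟩ := hcr
    subst h2
    have hseg' : SegCross (p u) (p v) (p x) (p y) := by
      rcases Sym2.eq_iff.mp h1 with ⟨h1a, h1b⟩ | ⟨h1a, h1b⟩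
      · rw [← h1a, ← h1b] at hseg; exact hseg
      · rw [← h1a, ← h1b] at hseg; exact segcross_swap1 hseg
    have hxy : x ≠ y := by
      have := G.not_isDiag_of_mem_edgeSet hfG
      rw [Sym2.mk_isDiag_iff] at this
      exact this
    by_cases hxu : x = u
    · subst hxu
      have hyx : y ≠ x := Ne.symm hxy
      have hyv : y ≠ v := fun h => hfne (by rw [h])
      exact absurd hseg' (no_cross_share hgen huv (Ne.symm hyx) (Ne.symm hyv))
    by_cases hxv : x = v
    · subst hxv
      have hyx : y ≠ x := Ne.symm hxy
      have hyu : y ≠ u := fun h => hfne (by rw [h, Sym2.eq_swap])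
      exact absurd (segcross_swap1 hseg')
        (no_cross_share hgen (Ne.symm huv) (Ne.symm hyx) (Ne.symm hyu))
    by_cases hyu : y = u
    · subst hyu
      exact absurd (segcross_swap2 hseg')
        (no_cross_share hgen huv (fun h => hxu h.symm) (fun h => hxv h.symm))
    by_cases hyv : y = v
    · subst hyv
      exact absurd (segcross_swap1 (segcross_swap2 hseg'))
        (no_cross_share hgen (Ne.symm huv) (fun h => hxv h.symm) (fun h => hxu h.symm))
    have sep1 := sep_of_cross hgen huv (fun h => hxu h.symm) (fun h => hyu h.symm)
      (fun h => hxv h.symm) (fun h => hyv h.symm) hxy hseg'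
    have sep2 := sep_of_cross hgen hxy hxu hxv hyu hyv huv (segcross_comm hseg')
    rcases mul_neg_iff.mp sep1 with ⟨hxp, hyn⟩ | ⟨hxn, hyp⟩
    · exact ⟨x, y, Finset.mem_univ x, Finset.mem_univ y, hfG, hfc, hxp, hyn, sep2⟩
    · refine ⟨y, x, Finset.mem_univ y, Finset.mem_univ x, ?_, ?_, hyp, hxn, ?_⟩
      · rw [Sym2.eq_swap]; exact hfG
      · rw [Sym2.eq_swap]; exact hfc
      · have e1 : Dt p y x u = - Dt p x y u := by rw [Dt_swap12]
        have e2 : Dt p y x v = - Dt p x y v := by rw [Dt_swap12]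
        rw [e1, e2, neg_mul_neg]
        exact sep2
  by_cases heu : e = s(u, v)
  · by_cases hfu : f = s(u, v)
    · exact absurd (heu.trans hfu.symm) hef
    · have hfG : f ∈ G.edgeSet := by
        rcases hf with hf | ⟨hf1, _⟩
        · exact hf
        · exact absurd (Set.mem_singleton_iff.mp hf1) hfu
      have hfc : φ f = c := by
        have h1 := heq
        simp only [heu, hfu, if_true, if_false, ite_true, ite_false, eq_self_iff_true] at h1
        exact h1.symm
      exact core f hfG hfu hfc (heu ▸ hcross)
  · by_cases hfu : f = s(u, v)
    · have heG : e ∈ G.edgeSet := by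
        rcases he with he | ⟨he1, _⟩
        · exact he
        · exact absurd (Set.mem_singleton_iff.mp he1) heu
      have hec : φ e = c := by
        have h1 := heq
        simp only [heu, hfu, if_true, if_false, ite_true, ite_false, eq_self_iff_true] at h1
        exact h1
      exact core e heG heu hec (hfu ▸ edgecross_comm hcross)
    · have heG : e ∈ G.edgeSet := by
        rcases he with he | ⟨he1, _⟩
        · exact he
        · exact absurd (Set.mem_singleton_iff.mp he1) heu
      have hfG : f ∈ G.edgeSet := by
        rcases hf with hf | ⟨hf1, _⟩
        · exact hf
        · exact absurd (Set.mem_singleton_iff.mp hf1) hfu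
      have heqφ : φ e = φ f := by
        have h1 := heq
        simp only [heu, hfu, if_true, if_false, ite_true, ite_false] at h1
        exact h1
      exact absurd hcross (hφ e heG f hfG hef heqφ)

end Stmt7Aux6
namespace Stmt7Aux7
open Stmt7Aux Stmt7Aux2 Stmt7Aux3 Stmt7Aux4 Stmt7Aux5 Stmt7Aux6

variable {n : ℕ} {G : SimpleGraph (Fin n)} {p : Fin n → Pt} {φ : Sym2 (Fin n) → Fin 3}

lemma fin3 (c x1 x2 x3 x4 x5 : Fin 3) (h1 : x1 ≠ c) (h2 : x2 ≠ c) (h3 : x3 ≠ c)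
    (h4 : x4 ≠ c) (h5 : x5 ≠ c) (h12 : x1 ≠ x2) (h23 : x2 ≠ x3) (h34 : x3 ≠ x4)
    (h45 : x4 ≠ x5) (h51 : x5 ≠ x1) : False := by
  have e1 : x1.val ≠ c.val := fun h => h1 (Fin.ext h)
  have e2 : x2.val ≠ c.val := fun h => h2 (Fin.ext h)
  have e3 : x3.val ≠ c.val := fun h => h3 (Fin.ext h)
  have e4 : x4.val ≠ c.val := fun h => h4 (Fin.ext h)
  have e5 : x5.val ≠ c.val := fun h => h5 (Fin.ext h)
  have f12 : x1.val ≠ x2.val := fun h => h12 (Fin.ext h)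
  have f23 : x2.val ≠ x3.val := fun h => h23 (Fin.ext h)
  have f34 : x3.val ≠ x4.val := fun h => h34 (Fin.ext h)
  have f45 : x4.val ≠ x5.val := fun h => h45 (Fin.ext h)
  have f51 : x5.val ≠ x1.val := fun h => h51 (Fin.ext h)
  have := c.isLt
  have := x1.isLt
  have := x2.isLt
  have := x3.isLt
  have := x4.isLt
  have := x5.isLt
  omega

lemma Dt_cycle2 (a b c : Fin n) : Dt p a b c = Dt p c a b := by
  rw [Dt_cycle, Dt_cycle]

/-- The five diagonals of a convex pentagon cannot be properly 2-colored. -/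
lemma pentagon (hgen : GenPos p) (hconv : ConvexPos p) (hφ : CrossingFree G p φ)
    (c : Fin 3) {q1 q2 q3 q4 q5 : Fin n}
    (t123 : 0 < Dt p q1 q2 q3) (t124 : 0 < Dt p q1 q2 q4) (t125 : 0 < Dt p q1 q2 q5)
    (t134 : 0 < Dt p q1 q3 q4) (t135 : 0 < Dt p q1 q3 q5) (t145 : 0 < Dt p q1 q4 q5)
    (t234 : 0 < Dt p q2 q3 q4) (t235 : 0 < Dt p q2 q3 q5) (t245 : 0 < Dt p q2 q4 q5)
    (t345 : 0 < Dt p q3 q4 q5)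
    (hd1 : s(q1, q3) ∈ G.edgeSet ∧ φ s(q1, q3) ≠ c)
    (hd2 : s(q2, q4) ∈ G.edgeSet ∧ φ s(q2, q4) ≠ c)
    (hd3 : s(q3, q5) ∈ G.edgeSet ∧ φ s(q3, q5) ≠ c)
    (hd4 : s(q1, q4) ∈ G.edgeSet ∧ φ s(q1, q4) ≠ c)
    (hd5 : s(q2, q5) ∈ G.edgeSet ∧ φ s(q2, q5) ≠ c) : False := by
  have ne12 : φ s(q1, q3) ≠ φ s(q2, q4) := by
    have h2 : Dt p q1 q3 q2 < 0 := by rw [Dt_swap23] at t123; linarith [t123]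
    have := color_ne hgen hconv hφ t134 h2 hd1.1
      (by rw [show s(q4, q2) = s(q2, q4) from Sym2.eq_swap]; exact hd2.1)
    rwa [show s(q4, q2) = s(q2, q4) from Sym2.eq_swap] at this
  have ne23 : φ s(q2, q4) ≠ φ s(q3, q5) := by
    have h2 : Dt p q2 q4 q3 < 0 := by rw [Dt_swap23] at t234; linarith [t234]
    have := color_ne hgen hconv hφ t245 h2 hd2.1
      (by rw [show s(q5, q3) = s(q3, q5) from Sym2.eq_swap]; exact hd3.1)
    rwa [show s(q5, q3) = s(q3, q5) from Sym2.eq_swap] at this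
  have ne34 : φ s(q3, q5) ≠ φ s(q1, q4) := by
    have h1 : 0 < Dt p q3 q5 q1 := by rw [Dt_cycle2]; exact t135
    have h2 : Dt p q3 q5 q4 < 0 := by rw [Dt_swap23] at t345; linarith [t345]
    exact color_ne hgen hconv hφ h1 h2 hd3.1 hd4.1
  have ne45 : φ s(q1, q4) ≠ φ s(q2, q5) := by
    have h2 : Dt p q1 q4 q2 < 0 := by rw [Dt_swap23] at t124; linarith [t124]
    have := color_ne hgen hconv hφ t145 h2 hd4.1
      (by rw [show s(q5, q2) = s(q2, q5) from Sym2.eq_swap]; exact hd5.1)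
    rwa [show s(q5, q2) = s(q2, q5) from Sym2.eq_swap] at this
  have ne51 : φ s(q2, q5) ≠ φ s(q1, q3) := by
    have h1 : 0 < Dt p q2 q5 q1 := by rw [Dt_cycle2]; exact t125
    have h2 : Dt p q2 q5 q3 < 0 := by rw [Dt_swap23] at t235; linarith [t235]
    exact color_ne hgen hconv hφ h1 h2 hd5.1 hd1.1
  exact fin3 c _ _ _ _ _ hd1.2 hd2.2 hd3.2 hd4.2 hd5.2 ne12 ne23 ne34 ne45 ne51

/-- `a`, `b` form an inner pair of `W`. -/
def Inn (p : Fin n → Pt) (W : Finset (Fin n)) (a b : Fin n) : Prop :=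
  a ∈ W ∧ b ∈ W ∧ a ≠ b ∧ (∃ w ∈ W, 0 < Dt p a b w) ∧ (∃ w ∈ W, Dt p a b w < 0)

/-- The set of inner edges of `W` of color `c`. -/
noncomputable def chordsF (G : SimpleGraph (Fin n)) (p : Fin n → Pt)
    (φ : Sym2 (Fin n) → Fin 3) (c : Fin 3) (W : Finset (Fin n)) : Finset (Sym2 (Fin n)) :=
  Finset.univ.filter (fun e => e ∈ G.edgeSet ∧ φ e = c ∧ ∃ a b, e = s(a, b) ∧ Inn p W a b)

lemma Inn.swap {W : Finset (Fin n)} {a b : Fin n} (h : Inn p W a b) : Inn p W b a := by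
  obtain ⟨ha, hb, hab, ⟨w1, hw1, h1⟩, ⟨w2, hw2, h2⟩⟩ := h
  refine ⟨hb, ha, hab.symm, ⟨w2, hw2, ?_⟩, ⟨w1, hw1, ?_⟩⟩
  · rw [Dt_swap12] at h2; linarith
  · rw [Dt_swap12] at h1; linarith

lemma Inn.mono {W W' : Finset (Fin n)} (hW : W' ⊆ W) {a b : Fin n}
    (h : Inn p W' a b) : Inn p W a b := by
  obtain ⟨ha, hb, hab, ⟨w1, hw1, h1⟩, ⟨w2, hw2, h2⟩⟩ := h
  exact ⟨hW ha, hW hb, hab, ⟨w1, hW hw1, h1⟩, ⟨w2, hW hw2, h2⟩⟩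

lemma inn_of_sep {W : Finset (Fin n)} {a b u v : Fin n} (ha : a ∈ W) (hb : b ∈ W)
    (hu : u ∈ W) (hv : v ∈ W) (hprod : Dt p a b u * Dt p a b v < 0) : Inn p W a b := by
  have hab : a ≠ b := by
    rintro rfl
    rw [Dt_self1] at hprod
    simp at hprod
  rcases mul_neg_iff.mp hprod with ⟨h1, h2⟩ | ⟨h1, h2⟩
  · exact ⟨ha, hb, hab, ⟨u, hu, h1⟩, ⟨v, hv, h2⟩⟩
  · exact ⟨ha, hb, hab, ⟨v, hv, h2⟩, ⟨u, hu, h1⟩⟩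

lemma mem_chordsF {W : Finset (Fin n)} {c : Fin 3} {a b : Fin n}
    (he : s(a, b) ∈ G.edgeSet) (hc : φ s(a, b) = c) (hI : Inn p W a b) :
    s(a, b) ∈ chordsF G p φ c W :=
  Finset.mem_filter.mpr ⟨Finset.mem_univ _, he, hc, a, b, rfl, hI⟩

end Stmt7Aux7
namespace Stmt7Aux8
open Stmt7Aux Stmt7Aux2 Stmt7Aux3 Stmt7Aux4 Stmt7Aux5 Stmt7Aux6 Stmt7Aux7

variable {n : ℕ} {G : SimpleGraph (Fin n)} {p : Fin n → Pt} {φ : Sym2 (Fin n) → Fin 3}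

lemma five_distinct {W : Finset (Fin n)} (h : 5 ≤ W.card) :
    ∃ v1 v2 v3 v4 v5 : Fin n, v1 ∈ W ∧ v2 ∈ W ∧ v3 ∈ W ∧ v4 ∈ W ∧ v5 ∈ W ∧
      v1 ≠ v2 ∧ v1 ≠ v3 ∧ v1 ≠ v4 ∧ v1 ≠ v5 ∧ v2 ≠ v3 ∧ v2 ≠ v4 ∧ v2 ≠ v5 ∧
      v3 ≠ v4 ∧ v3 ≠ v5 ∧ v4 ≠ v5 := by
  obtain ⟨v1, h1⟩ := Finset.card_pos.mp (show 0 < W.card by omega)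
  have c1 : 4 ≤ (W.erase v1).card := by rw [Finset.card_erase_of_mem h1]; omega
  obtain ⟨v2, h2⟩ := Finset.card_pos.mp (show 0 < (W.erase v1).card by omega)
  have c2 : 3 ≤ ((W.erase v1).erase v2).card := by
    rw [Finset.card_erase_of_mem h2]; omega
  obtain ⟨v3, h3⟩ := Finset.card_pos.mp (show 0 < ((W.erase v1).erase v2).card by omega)
  have c3 : 2 ≤ (((W.erase v1).erase v2).erase v3).card := by
    rw [Finset.card_erase_of_mem h3]; omega
  obtain ⟨v4, h4⟩ := Finset.card_pos.mp
    (show 0 < (((W.erase v1).erase v2).erase v3).card by omega)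
  have c4 : 1 ≤ ((((W.erase v1).erase v2).erase v3).erase v4).card := by
    rw [Finset.card_erase_of_mem h4]; omega
  obtain ⟨v5, h5⟩ := Finset.card_pos.mp
    (show 0 < ((((W.erase v1).erase v2).erase v3).erase v4).card by omega)
  have m5a := Finset.mem_of_mem_erase h5
  have m5b := Finset.mem_of_mem_erase m5a
  have m5c := Finset.mem_of_mem_erase m5b
  have m4a := Finset.mem_of_mem_erase h4
  have m4b := Finset.mem_of_mem_erase m4a
  have m3a := Finset.mem_of_mem_erase h3
  refine ⟨v1, v2, v3, v4, v5, h1, Finset.mem_of_mem_erase h2,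
    Finset.mem_of_mem_erase m3a, Finset.mem_of_mem_erase m4b,
    Finset.mem_of_mem_erase m5c, ?_, ?_, ?_, ?_, ?_, ?_, ?_, ?_, ?_, ?_⟩
  · exact (Finset.ne_of_mem_erase h2).symm
  · exact (Finset.ne_of_mem_erase m3a).symm
  · exact (Finset.ne_of_mem_erase m4b).symm
  · exact (Finset.ne_of_mem_erase m5c).symm
  · exact (Finset.ne_of_mem_erase h3).symm
  · exact (Finset.ne_of_mem_erase m4a).symm
  · exact (Finset.ne_of_mem_erase m5b).symm
  · exact (Finset.ne_of_mem_erase h4).symm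
  · exact (Finset.ne_of_mem_erase m5a).symm
  · exact (Finset.ne_of_mem_erase h5).symm

lemma main (hgen : GenPos p) (hconv : ConvexPos p) (hφ : CrossingFree G p φ) (c : Fin 3) :
    ∀ m : ℕ, ∀ W : Finset (Fin n), (chordsF G p φ c W).card ≤ m → HAp G p φ c W →
      W.card ≤ 2 * (chordsF G p φ c W).card + 4 := by
  intro m
  induction m with
  | zero =>
    intro W hm hHA
    have h0 : (chordsF G p φ c W).card = 0 := Nat.le_zero.mp hm
    have hempty : chordsF G p φ c W = ∅ := Finset.card_eq_zero.mp h0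
    rw [h0]
    by_contra h5
    push_neg at h5
    have h5' : 5 ≤ W.card := by omega
    obtain ⟨v1, v2, v3, v4, v5, hv1, hv2, hv3, hv4, hv5, d12, d13, d14, d15, d23, d24,
      d25, d34, d35, d45⟩ := five_distinct h5'
    have hdiag : ∀ u v wp wm : Fin n, u ∈ W → v ∈ W → wp ∈ W → wm ∈ W →
        0 < Dt p u v wp → Dt p u v wm < 0 → s(u, v) ∈ G.edgeSet ∧ φ s(u, v) ≠ c := by
      intro u v wp wm hu hv hwp hwm hp hm'
      have huv : u ≠ v := (distinct_of_signs hgen hp hm').1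
      have hInn : Inn p W u v := ⟨hu, hv, huv, ⟨wp, hwp, hp⟩, ⟨wm, hwm, hm'⟩⟩
      have hedge : s(u, v) ∈ G.edgeSet := by
        by_contra hne
        obtain ⟨a, b, ha, hb, hE, hC, hpos, hneg, hprod⟩ := hHA u v hu hv huv hne
        have hmem := mem_chordsF (G := G) hE hC (inn_of_sep ha hb hu hv hprod)
        rw [hempty] at hmem
        exact absurd hmem (Finset.notMem_empty _)
      refine ⟨hedge, ?_⟩
      intro hc
      have hmem := mem_chordsF (G := G) hedge hc hInn
      rw [hempty] at hmem
      exact absurd hmem (Finset.notMem_empty _)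
    obtain ⟨q1, q2, q3, q4, q5, m1, m2, m3, m4, m5, t123, t124, t125, t134, t135,
      t145, t234, t235, t245, t345⟩ :=
      order5 hgen hconv d12 d13 d14 d15 d23 d24 d25 d34 d35 d45
    have hq1W : q1 ∈ W := by rcases m1 with rfl | rfl | rfl | rfl | rfl <;> assumption
    have hq2W : q2 ∈ W := by rcases m2 with rfl | rfl | rfl | rfl | rfl <;> assumption
    have hq3W : q3 ∈ W := by rcases m3 with rfl | rfl | rfl | rfl | rfl <;> assumption
    have hq4W : q4 ∈ W := by rcases m4 with rfl | rfl | rfl | rfl | rfl <;> assumption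
    have hq5W : q5 ∈ W := by rcases m5 with rfl | rfl | rfl | rfl | rfl <;> assumption
    have s123 : Dt p q1 q3 q2 < 0 := by rw [Dt_swap23] at t123; linarith
    have s234 : Dt p q2 q4 q3 < 0 := by rw [Dt_swap23] at t234; linarith
    have s345 : Dt p q3 q5 q4 < 0 := by rw [Dt_swap23] at t345; linarith
    have s124 : Dt p q1 q4 q2 < 0 := by rw [Dt_swap23] at t124; linarith
    have s235 : Dt p q2 q5 q3 < 0 := by rw [Dt_swap23] at t235; linarith
    have c135 : 0 < Dt p q3 q5 q1 := by rw [Dt_cycle2]; exact t135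
    have c125 : 0 < Dt p q2 q5 q1 := by rw [Dt_cycle2]; exact t125
    exact pentagon hgen hconv hφ c t123 t124 t125 t134 t135 t145 t234 t235 t245 t345
      (hdiag q1 q3 q4 q2 hq1W hq3W hq4W hq2W t134 s123)
      (hdiag q2 q4 q5 q3 hq2W hq4W hq5W hq3W t245 s234)
      (hdiag q3 q5 q1 q4 hq3W hq5W hq1W hq4W c135 s345)
      (hdiag q1 q4 q5 q2 hq1W hq4W hq5W hq2W t145 s124)
      (hdiag q2 q5 q1 q3 hq2W hq5W hq1W hq3W c125 s235)
  | succ m ih =>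
    intro W hm hHA
    by_cases hle : (chordsF G p φ c W).card ≤ m
    · exact ih W hle hHA
    · have hcard : (chordsF G p φ c W).card = m + 1 := by omega
      obtain ⟨e0, he0⟩ := Finset.card_pos.mp (show 0 < (chordsF G p φ c W).card by omega)
      obtain ⟨_, hE0, hC0, a0, b0, heq0, hI0⟩ := Finset.mem_filter.mp he0
      have hTFne : ((Finset.univ : Finset (Fin n × Fin n)).filter
          (fun q => s(q.1, q.2) ∈ G.edgeSet ∧ φ s(q.1, q.2) = c ∧ Inn p W q.1 q.2)).Nonempty := by
        refine ⟨(a0, b0), Finset.mem_filter.mpr ⟨Finset.mem_univ _, ?_, ?_, hI0⟩⟩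
        · rw [← heq0]; exact hE0
        · rw [← heq0]; exact hC0
      obtain ⟨⟨x, y⟩, hxyT, hmin⟩ := Finset.exists_min_image _
        (fun q : Fin n × Fin n => (W.filter (fun w => 0 < Dt p q.1 q.2 w)).card) hTFne
      obtain ⟨_, hxyE, hxyC, hxyI⟩ := Finset.mem_filter.mp hxyT
      set S : Finset (Fin n) := W.filter (fun w => 0 < Dt p x y w) with hSdef
      have hSsub : S ⊆ W := Finset.filter_subset _ _
      have hSne : S.Nonempty := by
        obtain ⟨_, _, _, ⟨w, hwW, hw⟩, _⟩ := hxyI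
        exact ⟨w, Finset.mem_filter.mpr ⟨hwW, hw⟩⟩
      have hxy' : x ≠ y := hxyI.2.2.1
      have keystep : ∀ a b : Fin n, a ∈ S → b ∈ W → s(a, b) ∈ G.edgeSet →
          φ s(a, b) = c → Inn p W a b → False := by
        intro a b haS hbW hedge hcol hInn
        obtain ⟨haW, haPos⟩ := Finset.mem_filter.mp haS
        have hab : a ≠ b := hInn.2.2.1
        have hax : a ≠ x := by rintro rfl; rw [Dt_self2] at haPos; exact lt_irrefl _ haPos
        have hay : a ≠ y := by rintro rfl; rw [Dt_self3] at haPos; exact lt_irrefl _ haPos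
        by_cases hbneg : Dt p x y b < 0
        · have cross := cross_of_sep hgen hconv haPos hbneg
          have hne_e : s(a, b) ≠ s(x, y) := by
            intro h
            rcases Sym2.eq_iff.mp h with ⟨h1, _⟩ | ⟨h1, _⟩
            exacts [hax h1, hay h1]
          exact hφ s(a, b) hedge s(x, y) hxyE hne_e (hcol.trans hxyC.symm)
            ⟨a, b, x, y, rfl, rfl, cross⟩
        · push_neg at hbneg
          have hside : (∀ w, w ∈ W → Dt p x y w ≤ 0 → w ≠ a → w ≠ b → 0 < Dt p a b w) ∨
              (∀ w, w ∈ W → Dt p x y w ≤ 0 → w ≠ a → w ≠ b → Dt p a b w < 0) := by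
            by_contra hcon
            push_neg at hcon
            obtain ⟨⟨w1, hw1W, hw1xy, hw1a, hw1b, hw1n⟩,
              ⟨w2, hw2W, hw2xy, hw2a, hw2b, hw2n⟩⟩ := hcon
            have hw1neg : Dt p a b w1 < 0 :=
              lt_of_le_of_ne hw1n (Dne hgen hab (Ne.symm hw1a) (Ne.symm hw1b))
            have hw2pos : 0 < Dt p a b w2 :=
              lt_of_le_of_ne hw2n ((Dne hgen hab (Ne.symm hw2a) (Ne.symm hw2b)).symm)
            obtain ⟨q, hq1, hq2⟩ := cross_of_sep hgen hconv hw2pos hw1neg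
            obtain ⟨s1, t1c, hs1, ht1, hst1, he1⟩ := hq1
            obtain ⟨s2, t2c, hs2, ht2, hst2, he2⟩ := hq2
            have hv1 : det2 (p x) (p y) q = s1 * Dt p x y w2 + t1c * Dt p x y w1 := by
              rw [← he1, det2_combo hst1]; rfl
            have hv2 : det2 (p x) (p y) q = s2 * Dt p x y a + t2c * Dt p x y b := by
              rw [← he2, det2_combo hst2]; rfl
            have hb1 := mul_pos hs2 haPos
            have hb2 := mul_nonneg ht2.le hbneg
            have hb3 := mul_nonpos_of_nonneg_of_nonpos hs1.le hw2xy
            have hb4 := mul_nonpos_of_nonneg_of_nonpos ht1.le hw1xy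
            linarith
          rcases hside with hL | hR
          · have hsub : W.filter (fun w => 0 < Dt p b a w) ⊆ S.erase a := by
              intro w hw
              obtain ⟨hwW, hwpos⟩ := Finset.mem_filter.mp hw
              have hwneg : Dt p a b w < 0 := by rw [Dt_swap12] at hwpos; linarith
              have hwa : w ≠ a := by
                rintro rfl; rw [Dt_self2] at hwneg; exact lt_irrefl _ hwneg
              have hwb : w ≠ b := by
                rintro rfl; rw [Dt_self3] at hwneg; exact lt_irrefl _ hwneg
              have hwS : 0 < Dt p x y w := by
                by_contra hc2
                push_neg at hc2
                exact absurd (hL w hwW hc2 hwa hwb) (by linarith)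
              exact Finset.mem_erase.mpr ⟨hwa, Finset.mem_filter.mpr ⟨hwW, hwS⟩⟩
            have hba_mem : (b, a) ∈ (Finset.univ : Finset (Fin n × Fin n)).filter
                (fun q => s(q.1, q.2) ∈ G.edgeSet ∧ φ s(q.1, q.2) = c ∧ Inn p W q.1 q.2) :=
              Finset.mem_filter.mpr ⟨Finset.mem_univ _,
                by rw [Sym2.eq_swap]; exact hedge, by rw [Sym2.eq_swap]; exact hcol, hInn.swap⟩
            have hm1 := hmin (b, a) hba_mem
            have hm2 := Finset.card_le_card hsub
            rw [Finset.card_erase_of_mem haS] at hm2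
            have hpos : 0 < S.card := Finset.card_pos.mpr ⟨a, haS⟩
            simp only at hm1
            omega
          · have hsub : W.filter (fun w => 0 < Dt p a b w) ⊆ S.erase a := by
              intro w hw
              obtain ⟨hwW, hwpos⟩ := Finset.mem_filter.mp hw
              have hwa : w ≠ a := by
                rintro rfl; rw [Dt_self2] at hwpos; exact lt_irrefl _ hwpos
              have hwb : w ≠ b := by
                rintro rfl; rw [Dt_self3] at hwpos; exact lt_irrefl _ hwpos
              have hwS : 0 < Dt p x y w := by
                by_contra hc2
                push_neg at hc2
                exact absurd (hR w hwW hc2 hwa hwb) (by linarith)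
              exact Finset.mem_erase.mpr ⟨hwa, Finset.mem_filter.mpr ⟨hwW, hwS⟩⟩
            have hab_mem : (a, b) ∈ (Finset.univ : Finset (Fin n × Fin n)).filter
                (fun q => s(q.1, q.2) ∈ G.edgeSet ∧ φ s(q.1, q.2) = c ∧ Inn p W q.1 q.2) :=
              Finset.mem_filter.mpr ⟨Finset.mem_univ _, hedge, hcol, hInn⟩
            have hm1 := hmin (a, b) hab_mem
            have hm2 := Finset.card_le_card hsub
            rw [Finset.card_erase_of_mem haS] at hm2
            have hpos : 0 < S.card := Finset.card_pos.mpr ⟨a, haS⟩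
            simp only at hm1
            omega
      have hS2 : S.card ≤ 2 := by
        by_contra hS3
        push_neg at hS3
        obtain ⟨a1, ha1S⟩ := Finset.card_pos.mp (show 0 < S.card by omega)
        obtain ⟨a2, h2e, a3, h3e, hne23⟩ := Finset.one_lt_card.mp
          (show 1 < (S.erase a1).card by rw [Finset.card_erase_of_mem ha1S]; omega)
        have ha2S := Finset.mem_of_mem_erase h2e
        have ha3S := Finset.mem_of_mem_erase h3e
        have ha21 : a1 ≠ a2 := (Finset.ne_of_mem_erase h2e).symm
        have ha31 : a1 ≠ a3 := (Finset.ne_of_mem_erase h3e).symm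
        have hxW : x ∈ W := hxyI.1
        have hyW : y ∈ W := hxyI.2.1
        have haPos : ∀ z ∈ S, 0 < Dt p x y z := fun z hz => (Finset.mem_filter.mp hz).2
        have hSx : ∀ z ∈ S, z ≠ x := by
          intro z hz h
          have := haPos z hz
          rw [h, Dt_self2] at this
          exact lt_irrefl _ this
        have hSy : ∀ z ∈ S, z ≠ y := by
          intro z hz h
          have := haPos z hz
          rw [h, Dt_self3] at this
          exact lt_irrefl _ this
        have hdiag : ∀ u v wp wm : Fin n,
            (u = x ∨ u = y ∨ u ∈ S) → (v = x ∨ v = y ∨ v ∈ S) →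
            (wp = x ∨ wp = y ∨ wp ∈ S) → (wm = x ∨ wm = y ∨ wm ∈ S) →
            0 < Dt p u v wp → Dt p u v wm < 0 →
            s(u, v) ∈ G.edgeSet ∧ φ s(u, v) ≠ c := by
          intro u v wp wm hu hv hwp hwm hp hm'
          obtain ⟨huv, _, _, _, _, _⟩ := distinct_of_signs hgen hp hm'
          have memW : ∀ z, (z = x ∨ z = y ∨ z ∈ S) → z ∈ W := by
            rintro z (rfl | rfl | hz)
            exacts [hxW, hyW, hSsub hz]
          have huW := memW u hu
          have hvW := memW v hv
          have hwpW := memW wp hwp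
          have hwmW := memW wm hwm
          have hnotxy1 : ¬(u = x ∧ v = y) := by
            rintro ⟨rfl, rfl⟩
            rcases hwm with rfl | rfl | hwmS
            · rw [Dt_self2] at hm'; exact lt_irrefl _ hm'
            · rw [Dt_self3] at hm'; exact lt_irrefl _ hm'
            · exact absurd (haPos wm hwmS) (by linarith)
          have hnotxy2 : ¬(u = y ∧ v = x) := by
            rintro ⟨rfl, rfl⟩
            rw [Dt_swap12] at hp
            rcases hwp with rfl | rfl | hwpS
            · rw [Dt_self2] at hp; simp at hp
            · rw [Dt_self3] at hp; simp at hp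
            · exact absurd (haPos wp hwpS) (by linarith)
          have honeS : u ∈ S ∨ v ∈ S := by
            rcases hu with rfl | rfl | huS
            · rcases hv with rfl | rfl | hvS
              · exact absurd rfl huv
              · exact absurd ⟨rfl, rfl⟩ hnotxy1
              · exact Or.inr hvS
            · rcases hv with rfl | rfl | hvS
              · exact absurd ⟨rfl, rfl⟩ hnotxy2
              · exact absurd rfl huv
              · exact Or.inr hvS
            · exact Or.inl huS
          have hInn : Inn p W u v := ⟨huW, hvW, huv, ⟨wp, hwpW, hp⟩, ⟨wm, hwmW, hm'⟩⟩
          have hDu : 0 ≤ Dt p x y u := by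
            rcases hu with rfl | rfl | huS
            · exact le_of_eq (Dt_self2 _ _).symm
            · exact le_of_eq (Dt_self3 _ _).symm
            · exact le_of_lt (haPos u huS)
          have hDv : 0 ≤ Dt p x y v := by
            rcases hv with rfl | rfl | hvS
            · exact le_of_eq (Dt_self2 _ _).symm
            · exact le_of_eq (Dt_self3 _ _).symm
            · exact le_of_lt (haPos v hvS)
          have hDor : 0 < Dt p x y u ∨ 0 < Dt p x y v := by
            rcases hu with rfl | rfl | huS
            · rcases hv with rfl | rfl | hvS
              · exact absurd rfl huv
              · exact absurd ⟨rfl, rfl⟩ hnotxy1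
              · exact Or.inr (haPos v hvS)
            · rcases hv with rfl | rfl | hvS
              · exact absurd ⟨rfl, rfl⟩ hnotxy2
              · exact absurd rfl huv
              · exact Or.inr (haPos v hvS)
            · exact Or.inl (haPos u huS)
          have hedge : s(u, v) ∈ G.edgeSet := by
            by_contra hne
            obtain ⟨a, b, haW, hbW, hE, hC, hpos, hneg, hprod⟩ := hHA u v huW hvW huv hne
            obtain ⟨q, hq1, hq2⟩ := cross_of_sep hgen hconv hpos hneg
            obtain ⟨s1, t1c, hs1, ht1, hst1, he1⟩ := hq1
            obtain ⟨s2, t2c, hs2, ht2, hst2, he2⟩ := hq2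
            have hv1 : det2 (p x) (p y) q = s1 * Dt p x y a + t1c * Dt p x y b := by
              rw [← he1, det2_combo hst1]; rfl
            have hv2 : det2 (p x) (p y) q = s2 * Dt p x y u + t2c * Dt p x y v := by
              rw [← he2, det2_combo hst2]; rfl
            have hqpos : 0 < det2 (p x) (p y) q := by
              rw [hv2]
              rcases hDor with h | h
              · nlinarith [mul_pos hs2 h, mul_nonneg ht2.le hDv]
              · nlinarith [mul_pos ht2 h, mul_nonneg hs2.le hDu]
            have haborS : a ∈ S ∨ b ∈ S := by
              by_contra hcon
              push_neg at hcon
              obtain ⟨haS', hbS'⟩ := hcon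
              have hDa : Dt p x y a ≤ 0 := by
                by_contra h'
                push_neg at h'
                exact haS' (Finset.mem_filter.mpr ⟨haW, h'⟩)
              have hDb : Dt p x y b ≤ 0 := by
                by_contra h'
                push_neg at h'
                exact hbS' (Finset.mem_filter.mpr ⟨hbW, h'⟩)
              have g1 := mul_nonpos_of_nonneg_of_nonpos hs1.le hDa
              have g2 := mul_nonpos_of_nonneg_of_nonpos ht1.le hDb
              linarith
            have hInn_ab : Inn p W a b := inn_of_sep haW hbW huW hvW hprod
            rcases haborS with h | h
            · exact keystep a b h hbW hE hC hInn_ab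
            · exact keystep b a h haW (by rw [Sym2.eq_swap]; exact hE)
                (by rw [Sym2.eq_swap]; exact hC) hInn_ab.swap
          refine ⟨hedge, fun hcc => ?_⟩
          rcases honeS with h | h
          · exact keystep u v h hvW hedge hcc hInn
          · exact keystep v u h huW (by rw [Sym2.eq_swap]; exact hedge)
              (by rw [Sym2.eq_swap]; exact hcc) hInn.swap
        obtain ⟨q1, q2, q3, q4, q5, m1, m2, m3, m4, m5, t123, t124, t125, t134, t135,
          t145, t234, t235, t245, t345⟩ :=
          order5 hgen hconv (p := p) hxy' (Ne.symm (hSx a1 ha1S)) (Ne.symm (hSx a2 ha2S))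
            (Ne.symm (hSx a3 ha3S)) (Ne.symm (hSy a1 ha1S)) (Ne.symm (hSy a2 ha2S))
            (Ne.symm (hSy a3 ha3S)) ha21 ha31 hne23
        have conv5 : ∀ z : Fin n, (z = x ∨ z = y ∨ z = a1 ∨ z = a2 ∨ z = a3) →
            (z = x ∨ z = y ∨ z ∈ S) := by
          rintro z (rfl | rfl | rfl | rfl | rfl)
          exacts [Or.inl rfl, Or.inr (Or.inl rfl), Or.inr (Or.inr ha1S),
            Or.inr (Or.inr ha2S), Or.inr (Or.inr ha3S)]
        have hq1M := conv5 q1 m1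
        have hq2M := conv5 q2 m2
        have hq3M := conv5 q3 m3
        have hq4M := conv5 q4 m4
        have hq5M := conv5 q5 m5
        have s123 : Dt p q1 q3 q2 < 0 := by rw [Dt_swap23] at t123; linarith
        have s234 : Dt p q2 q4 q3 < 0 := by rw [Dt_swap23] at t234; linarith
        have s345 : Dt p q3 q5 q4 < 0 := by rw [Dt_swap23] at t345; linarith
        have s124 : Dt p q1 q4 q2 < 0 := by rw [Dt_swap23] at t124; linarith
        have s235 : Dt p q2 q5 q3 < 0 := by rw [Dt_swap23] at t235; linarith
        have c135 : 0 < Dt p q3 q5 q1 := by rw [Dt_cycle2]; exact t135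
        have c125 : 0 < Dt p q2 q5 q1 := by rw [Dt_cycle2]; exact t125
        exact pentagon hgen hconv hφ c t123 t124 t125 t134 t135 t145 t234 t235 t245 t345
          (hdiag q1 q3 q4 q2 hq1M hq3M hq4M hq2M t134 s123)
          (hdiag q2 q4 q5 q3 hq2M hq4M hq5M hq3M t245 s234)
          (hdiag q3 q5 q1 q4 hq3M hq5M hq1M hq4M c135 s345)
          (hdiag q1 q4 q5 q2 hq1M hq4M hq5M hq2M t145 s124)
          (hdiag q2 q5 q1 q3 hq2M hq5M hq1M hq3M c125 s235)
      -- remove S and recurse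
      have hHA' : HAp G p φ c (W \ S) := by
        intro u v hu hv huv hne
        obtain ⟨huW, huS⟩ := Finset.mem_sdiff.mp hu
        obtain ⟨hvW, hvS⟩ := Finset.mem_sdiff.mp hv
        obtain ⟨a, b, haW, hbW, hE, hC, hpos, hneg, hprod⟩ := hHA u v huW hvW huv hne
        have hInn : Inn p W a b := inn_of_sep haW hbW huW hvW hprod
        have haS : a ∉ S := fun h => keystep a b h hbW hE hC hInn
        have hbS : b ∉ S := fun h => keystep b a h haW
          (by rw [Sym2.eq_swap]; exact hE) (by rw [Sym2.eq_swap]; exact hC) hInn.swap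
        exact ⟨a, b, Finset.mem_sdiff.mpr ⟨haW, haS⟩, Finset.mem_sdiff.mpr ⟨hbW, hbS⟩,
          hE, hC, hpos, hneg, hprod⟩
      have hxy_mem : s(x, y) ∈ chordsF G p φ c W := mem_chordsF hxyE hxyC hxyI
      have hsub2 : chordsF G p φ c (W \ S) ⊆ (chordsF G p φ c W).erase s(x, y) := by
        intro e he
        obtain ⟨_, hE, hC, a, b, heq, hI⟩ := Finset.mem_filter.mp he
        have hIW : Inn p W a b := hI.mono Finset.sdiff_subset
        have hmemW : e ∈ chordsF G p φ c W :=
          Finset.mem_filter.mpr ⟨Finset.mem_univ _, hE, hC, a, b, heq, hIW⟩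
        have hne : e ≠ s(x, y) := by
          intro hcontra
          rw [hcontra] at heq
          rcases Sym2.eq_iff.mp heq with ⟨hax, hby⟩ | ⟨hax, hby⟩
          · obtain ⟨_, _, _, ⟨w, hwW, hw⟩, _⟩ := hI
            obtain ⟨hwW', hwS⟩ := Finset.mem_sdiff.mp hwW
            refine hwS (Finset.mem_filter.mpr ⟨hwW', ?_⟩)
            rw [hax, hby]
            exact hw
          · obtain ⟨_, _, _, _, ⟨w, hwW, hw⟩⟩ := hI
            obtain ⟨hwW', hwS⟩ := Finset.mem_sdiff.mp hwW
            refine hwS (Finset.mem_filter.mpr ⟨hwW', ?_⟩)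
            rw [hax, hby, Dt_swap12]
            linarith
        exact Finset.mem_erase.mpr ⟨hne, hmemW⟩
      have hcard' : (chordsF G p φ c (W \ S)).card ≤ m := by
        have hh := Finset.card_le_card hsub2
        rw [Finset.card_erase_of_mem hxy_mem, hcard] at hh
        omega
      have hrec := ih (W \ S) hcard' hHA'
      have he1 : (W \ S).card = W.card - S.card := Finset.card_sdiff_of_subset hSsub
      have hc2 := Finset.card_le_card hSsub
      rw [hcard]
      omega

end Stmt7Aux8
namespace Stmt7Aux9
open Stmt7Aux Stmt7Aux2 Stmt7Aux3 Stmt7Aux4 Stmt7Aux5 Stmt7Aux6 Stmt7Aux7 Stmt7Aux8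

variable {n : ℕ} {G : SimpleGraph (Fin n)} {p : Fin n → Pt} {φ : Sym2 (Fin n) → Fin 3}

lemma sym2_repr (e : Sym2 (Fin n)) : ∃ a b : Fin n, e = s(a, b) := by
  induction e using Sym2.ind with
  | _ a b => exact ⟨a, b, rfl⟩

lemma inner_char (hgen : GenPos p) {u v : Fin n} (huv : u ≠ v) :
    ¬ IsOuterEdge p s(u, v) ↔ Inn p Finset.univ u v := by
  constructor
  · intro hO
    have h1 : ¬ ((∀ w : Fin n, w ≠ u → w ≠ v → 0 < det2 (p u) (p v) (p w)) ∨
        (∀ w : Fin n, w ≠ u → w ≠ v → det2 (p u) (p v) (p w) < 0)) :=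
      fun h => hO ⟨u, v, rfl, h⟩
    push_neg at h1
    obtain ⟨h2, h3⟩ := h1
    obtain ⟨w1, hw1u, hw1v, hw1⟩ := h2
    obtain ⟨w2, hw2u, hw2v, hw2⟩ := h3
    have e1 : det2 (p u) (p v) (p w1) = Dt p u v w1 := rfl
    have e2 : det2 (p u) (p v) (p w2) = Dt p u v w2 := rfl
    rw [e1] at hw1
    rw [e2] at hw2
    have hw1' : Dt p u v w1 < 0 :=
      lt_of_le_of_ne hw1 (Dne hgen huv (Ne.symm hw1u) (Ne.symm hw1v))
    have hw2' : 0 < Dt p u v w2 :=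
      lt_of_le_of_ne hw2 ((Dne hgen huv (Ne.symm hw2u) (Ne.symm hw2v)).symm)
    exact ⟨Finset.mem_univ _, Finset.mem_univ _, huv,
      ⟨w2, Finset.mem_univ _, hw2'⟩, ⟨w1, Finset.mem_univ _, hw1'⟩⟩
  · rintro ⟨_, _, _, ⟨wp, _, hwp⟩, ⟨wm, _, hwm⟩⟩ ⟨u', v', heq, hside⟩
    have hwpu : wp ≠ u := by rintro rfl; rw [Dt_self2] at hwp; exact lt_irrefl _ hwp
    have hwpv : wp ≠ v := by rintro rfl; rw [Dt_self3] at hwp; exact lt_irrefl _ hwp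
    have hwmu : wm ≠ u := by rintro rfl; rw [Dt_self2] at hwm; exact lt_irrefl _ hwm
    have hwmv : wm ≠ v := by rintro rfl; rw [Dt_self3] at hwm; exact lt_irrefl _ hwm
    rcases Sym2.eq_iff.mp heq with ⟨h1, h2⟩ | ⟨h1, h2⟩
    · rw [← h1, ← h2] at hside
      rcases hside with hall | hall
      · have hthis := hall wm hwmu hwmv
        have e1 : det2 (p u) (p v) (p wm) = Dt p u v wm := rfl
        rw [e1] at hthis
        linarith
      · have hthis := hall wp hwpu hwpv
        have e1 : det2 (p u) (p v) (p wp) = Dt p u v wp := rfl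
        rw [e1] at hthis
        linarith
    · rw [← h1, ← h2] at hside
      rcases hside with hall | hall
      · have hthis := hall wp hwpv hwpu
        have e1 : det2 (p v) (p u) (p wp) = Dt p v u wp := rfl
        rw [e1, Dt_swap12] at hthis
        linarith
      · have hthis := hall wm hwmv hwmu
        have e1 : det2 (p v) (p u) (p wm) = Dt p v u wm := rfl
        rw [e1, Dt_swap12] at hthis
        linarith

lemma final (hgen : GenPos p) (hconv : ConvexPos p) (hφ : CrossingFree G p φ)
    (hsat : PrecoloredSaturated G p φ) (c : Fin 3) :
    2 * (({e : Sym2 (Fin n) | e ∈ G.edgeSet ∧ φ e = c ∧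
        ¬ IsOuterEdge p e}.ncard : ℤ)) ≥ (n : ℤ) - 4 := by
  have hHA := HA_univ hgen hφ hsat c
  have hmain := main hgen hconv hφ c (chordsF G p φ c Finset.univ).card
    Finset.univ le_rfl hHA
  have hset : {e : Sym2 (Fin n) | e ∈ G.edgeSet ∧ φ e = c ∧ ¬ IsOuterEdge p e}
      = ↑(chordsF G p φ c Finset.univ) := by
    ext e
    simp only [Set.mem_setOf_eq, Finset.mem_coe]
    constructor
    · rintro ⟨hE, hC, hO⟩
      obtain ⟨u, v, rfl⟩ := sym2_repr e
      have hnd := G.not_isDiag_of_mem_edgeSet hE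
      rw [Sym2.mk_isDiag_iff] at hnd
      exact mem_chordsF hE hC ((inner_char hgen hnd).mp hO)
    · intro h
      obtain ⟨_, hE, hC, a, b, heq, hI⟩ := Finset.mem_filter.mp h
      refine ⟨hE, hC, ?_⟩
      rw [heq]
      exact (inner_char hgen hI.2.2.1).mpr hI
  rw [hset, Set.ncard_coe_finset]
  have hu : (Finset.univ : Finset (Fin n)).card = n := by simp
  rw [hu] at hmain
  omega

end Stmt7Aux9
/-- In a saturated precolored convex Θ^3-drawing on `n ≥ 4`
vertices, each color class contains at least `(n-4)/2` inner edges. -/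
theorem stmt7 (n : ℕ) (hn : 4 ≤ n)
    (G : SimpleGraph (Fin n)) (p : Fin n → Pt) (φ : Sym2 (Fin n) → Fin 3)
    (hgen : GenPos p) (hconv : ConvexPos p)
    (hφ : CrossingFree G p φ) (hsat : PrecoloredSaturated G p φ) :
    ∀ c : Fin 3,
      2 * (({e : Sym2 (Fin n) | e ∈ G.edgeSet ∧ φ e = c ∧
          ¬ IsOuterEdge p e}.ncard : ℤ)) ≥ (n : ℤ) - 4 := by
  intro c
  exact Stmt7Aux9.final hgen hconv hφ hsat c
end
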